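/- arXiv:1305.0177 — 2 statements merged into one kernel-verified Lean document; each statement's English description precedes it below -/
import Mathlib

section
/- There is a constant k_0 ∈ ℕ such that for every k ≥ k_0, every c ∈ [0,4], and d = 2k·ln k − ln k − c, the following holds w.h.p. for G = G(n,⌈dn/2⌉): every k-coloring σ of G satisfies | |σ^{-1}(i)| − n/k | ≤ n/(k·(ln k)^{1/3}) for all colors i ∈ {1,...,k}. -/
open Filter

set_option maxHeartbeats 1600000

/-- Uniform counting probability on a finite sample space `Ω`. -/
noncomputable def prob {Ω : Type*} (p : Ω → Prop) : ℝ :=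
  (Nat.card {x : Ω // p x} : ℝ) / (Nat.card Ω : ℝ)

/-- The sample space of the random graph `G(n,m)`. -/
def GraphSpace (n m : ℕ) : Type :=
  {E : Finset (Sym2 (Fin n)) // E.card = m ∧ ∀ e ∈ E, ¬ e.IsDiag}

/-- `σ` is a proper `k`-coloring of the graph with edge set `E`. -/
def IsColoring {n k : ℕ} (E : Finset (Sym2 (Fin n))) (σ : Fin n → Fin k) : Prop :=
  ∀ u v : Fin n, s(u, v) ∈ E → σ u ≠ σ v

section Aux
open Finset

/- ----------  analytic lemmas ---------- -/

lemma log_one_sub_aux (x : ℝ) (hx0 : 0 ≤ x) (hx1 : x < 1) :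
    ∀ L : ℕ, Real.log (1 - x) ≤ -x - x^2/2 * (1 - (1/2)^L) := by
  have key : ∀ y : ℝ, 0 ≤ y → y < 1 →
      Real.log (1 - y) ≤ 2 * Real.log (1 - y/2) - y^2/4 := by
    intro y hy0 hy1
    have h2 : (0:ℝ) < 1 - y/2 := by linarith
    have h1 : (0:ℝ) < 1 - y := by linarith
    have hsq : (0:ℝ) < (1 - y/2)^2 := by positivity
    have hr : (0:ℝ) < (1 - y) / (1 - y/2)^2 := by positivity
    have hlog : Real.log (1 - y) = 2 * Real.log (1 - y/2)
        + Real.log ((1 - y) / (1 - y/2)^2) := by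
      rw [Real.log_div (ne_of_gt h1) (ne_of_gt hsq), Real.log_pow]
      push_cast; ring
    have hb : Real.log ((1 - y) / (1 - y/2)^2) ≤ (1 - y) / (1 - y/2)^2 - 1 :=
      Real.log_le_sub_one_of_pos hr
    have hle1 : (1 - y/2)^2 ≤ 1 := by nlinarith
    have hfin : (1 - y) / (1 - y/2)^2 ≤ 1 - y^2/4 := by
      rw [div_le_iff₀ hsq]
      nlinarith [sq_nonneg y, hy0, hy1]
    linarith [hlog, hb, hfin]
  intro L
  induction L generalizing x with
  | zero =>
      simp only [pow_zero, sub_self, mul_zero, sub_zero]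
      have := Real.log_le_sub_one_of_pos (show (0:ℝ) < 1 - x by linarith)
      linarith
  | succ L ih =>
      have hx2 : x/2 < 1 := by linarith
      have h := key x hx0 hx1
      have h2 := ih (x/2) (by linarith) hx2
      have : Real.log (1 - x) ≤ 2 * (-(x/2) - (x/2)^2/2 * (1 - (1/2)^L)) - x^2/4 := by
        linarith
      calc Real.log (1 - x) ≤ 2 * (-(x/2) - (x/2)^2/2 * (1 - (1/2)^L)) - x^2/4 := this
        _ = -x - x^2/2 * (1 - (1/2)^(L+1)) := by ring

lemma log_one_sub_le (x : ℝ) (hx0 : 0 ≤ x) (hx1 : x < 1) :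
    Real.log (1 - x) ≤ -x - x^2/2 := by
  have h := log_one_sub_aux x hx0 hx1
  have hlim : Tendsto (fun L : ℕ => -x - x^2/2 * (1 - (1/2)^L)) atTop
      (nhds (-x - x^2/2 * (1 - 0))) := by
    exact Tendsto.const_sub _ ((Tendsto.const_sub _
      (tendsto_pow_atTop_nhds_zero_of_lt_one (by norm_num) (by norm_num))).const_mul _)
  simpa using ge_of_tendsto hlim (Eventually.of_forall h)

lemma key_ineq (k : ℕ) (hkR : Real.exp 1000 ≤ k) (c : ℝ) (hc0 : 0 ≤ c) (hc4 : c ≤ 4)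
    (d : ℝ) (hd : d = 2*k*Real.log k - Real.log k - c) :
    Real.log k + d/2 * (Real.log (1 - 1/k) - (1/(k * Real.log k^((1:ℝ)/3)))^2)
      ≤ -(1/k) := by
  have hexp : (1000 : ℝ) + 1 ≤ Real.exp 1000 := by
    linarith [Real.add_one_le_exp (1000:ℝ)]
  have hk1 : (1001 : ℝ) ≤ k := by linarith
  have hk0 : (0:ℝ) < k := by linarith
  set L := Real.log k with hLdef
  have hL : (1000:ℝ) ≤ L := by
    have := Real.log_le_log (Real.exp_pos 1000) hkR
    rwa [Real.log_exp] at this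
  have hLk : L ≤ k := by
    have := Real.log_le_sub_one_of_pos hk0
    linarith
  set X := L ^ ((1:ℝ)/3) with hXdef
  have hX0 : 0 < X := Real.rpow_pos_of_pos (by linarith) _
  have hX3 : X^3 = L := by
    rw [hXdef, ← Real.rpow_natCast (L ^ ((1:ℝ)/3)) 3, ← Real.rpow_mul (by linarith)]
    norm_num
  have hX10 : (10:ℝ) ≤ X := by
    by_contra h
    push_neg at h
    have h2 : X^2 < 100 := by nlinarith
    have h3 : X^3 < 1000 := by nlinarith
    linarith
  have hd_pos : k * L ≤ d := by
    rw [hd]; nlinarith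
  have hd0 : (0:ℝ) < d := by nlinarith
  have hinv : (0:ℝ) ≤ 1/k := by positivity
  have hinv1 : (1:ℝ)/k < 1 := by
    rw [div_lt_one hk0]; linarith
  have hlog : Real.log (1 - 1/k) ≤ -(1/k) - (1/k)^2/2 := log_one_sub_le _ hinv hinv1
  have hA : L + d/2 * Real.log (1 - 1/k) ≤ 4/k := by
    have h1 : d/2 * Real.log (1 - 1/k) ≤ d/2 * (-(1/k) - (1/k)^2/2) := by
      apply mul_le_mul_of_nonneg_left hlog (by linarith)
    have heq : L + d/2 * (-(1/(k:ℝ)) - (1/(k:ℝ))^2/2)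
        = (L + 2*(k:ℝ)*c + c)/(4*(k:ℝ)^2) := by
      rw [hd]
      field_simp
      ring
    have e5 : (L + 2*(k:ℝ)*c + c)/(4*(k:ℝ)^2) ≤ 4/(k:ℝ) := by
      rw [div_le_div_iff₀ (by positivity) hk0]
      nlinarith
    linarith [heq, e5, h1]
  have hB : 5/k ≤ d/2 * (1/(k*X))^2 := by
    have hrw : d/2 * (1/(k*X))^2 = d/(2*k^2*X^2) := by
      field_simp
    rw [hrw, div_le_div_iff₀ hk0 (by positivity)]
    have h5 : k^2 * L ≤ d * k := by nlinarith
    have h6 : 10*X^2 ≤ L := by nlinarith [hX3, hX10, hX0.le]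
    nlinarith [sq_nonneg (k:ℝ), hX0.le, hk0.le]
  have hsplit : d/2 * (Real.log (1 - 1/(k:ℝ)) - (1/(k * X))^2)
      = d/2 * Real.log (1 - 1/(k:ℝ)) - d/2 * (1/(k*X))^2 := by ring
  have hsum : 4/(k:ℝ) - 5/(k:ℝ) = -(1/(k:ℝ)) := by ring
  rw [hsplit]
  linarith [hA, hB, hsum]

lemma one_sub_q_bound (k : ℕ) (hk : 2 ≤ k) (α s : ℝ)
    (hs : 0 ≤ s) (hdev : s ≤ |α - 1/k|) :
    1 - (α^2 + (1-α)^2/((k:ℝ)-1)) ≤ (1 - 1/k) * Real.exp (-s^2) := by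
  have hkR : (2:ℝ) ≤ (k:ℝ) := by exact_mod_cast hk
  have hk1 : (1:ℝ) ≤ (k:ℝ) - 1 := by linarith
  have hk0 : (0:ℝ) < k := by linarith
  have hkm1 : (0:ℝ) < (k:ℝ) - 1 := by linarith
  set x := (α - 1/k) * k / ((k:ℝ)-1) with hx
  have hq : 1 - (α^2 + (1-α)^2/((k:ℝ)-1)) = (1 - 1/k) * (1 - x^2) := by
    rw [hx]
    field_simp
    ring
  have hxs : s^2 ≤ x^2 := by
    have h1 : |α - 1/k| ≤ |x| := by
      rw [hx, abs_div, abs_mul, abs_of_pos hk0, abs_of_pos hkm1]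
      rw [le_div_iff₀ hkm1]
      have : |α - 1/(k:ℝ)| * ((k:ℝ)-1) ≤ |α - 1/(k:ℝ)| * k := by
        apply mul_le_mul_of_nonneg_left (by linarith) (abs_nonneg _)
      linarith
    have h2 : s ≤ |x| := le_trans hdev h1
    calc s^2 ≤ |x|^2 := by nlinarith [abs_nonneg x]
      _ = x^2 := sq_abs x
  have hexp : 1 - x^2 ≤ Real.exp (-x^2) := by
    have := Real.add_one_le_exp (-x^2)
    linarith
  have hexp2 : Real.exp (-x^2) ≤ Real.exp (-s^2) := by
    apply Real.exp_le_exp.mpr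
    linarith
  rw [hq]
  have h1k : (0:ℝ) ≤ 1 - 1/k := by
    rw [sub_nonneg, div_le_one hk0]; linarith
  calc (1 - 1/(k:ℝ)) * (1 - x^2) ≤ (1 - 1/k) * Real.exp (-x^2) :=
        mul_le_mul_of_nonneg_left hexp h1k
    _ ≤ (1 - 1/k) * Real.exp (-s^2) := mul_le_mul_of_nonneg_left hexp2 h1k

/- ----------  combinatorial lemmas ---------- -/

lemma descFactorial_mul_pow_le (N : ℕ) : ∀ F m : ℕ, F ≤ N →
    F.descFactorial m * N^m ≤ N.descFactorial m * F^m := by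
  intro F m hFN
  induction m with
  | zero => simp
  | succ m ih =>
      rw [Nat.descFactorial_succ, Nat.descFactorial_succ, pow_succ, pow_succ]
      have h1 : (F - m) * N ≤ (N - m) * F := by
        rcases le_total m F with h | h
        · have h2 : m * F ≤ m * N := Nat.mul_le_mul_left m hFN
          have h3 : m * N ≤ F * N := Nat.mul_le_mul_right N h
          have h4 : F * N = N * F := Nat.mul_comm F N
          rw [Nat.sub_mul, Nat.sub_mul]
          omega
        · have : F - m = 0 := Nat.sub_eq_zero_of_le h
          simp [this]
      calc (F - m) * F.descFactorial m * (N^m * N)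
          = ((F - m) * N) * (F.descFactorial m * N^m) := by ring
        _ ≤ ((N - m) * F) * (N.descFactorial m * F^m) := Nat.mul_le_mul h1 ih
        _ = (N - m) * N.descFactorial m * (F^m * F) := by ring

lemma choose_mul_pow_le (N F m : ℕ) (hFN : F ≤ N) :
    F.choose m * N^m ≤ N.choose m * F^m := by
  have h := descFactorial_mul_pow_le N F m hFN
  rw [Nat.descFactorial_eq_factorial_mul_choose, Nat.descFactorial_eq_factorial_mul_choose] at h
  rw [mul_assoc, mul_assoc] at h
  exact Nat.le_of_mul_le_mul_left h (Nat.factorial_pos m)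

lemma choose_ratio_le (N F m : ℕ) (hFN : F ≤ N) (hmN : m ≤ N) (hN : 0 < N) :
    (F.choose m : ℝ) / (N.choose m : ℝ) ≤ ((F : ℝ)/(N : ℝ))^m := by
  have hch : (0:ℝ) < N.choose m := by exact_mod_cast Nat.choose_pos hmN
  have hNp : (0:ℝ) < (N:ℝ)^m := by positivity
  rw [div_pow, div_le_div_iff₀ hch (by positivity)]
  calc (F.choose m : ℝ) * (N:ℝ)^m = ((F.choose m * N^m : ℕ) : ℝ) := by push_cast; ring
    _ ≤ ((N.choose m * F^m : ℕ) : ℝ) := by exact_mod_cast choose_mul_pow_le N F m hFN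
    _ = (F:ℝ)^m * (N.choose m : ℝ) := by push_cast; ring

def allPairs (n : ℕ) : Finset (Sym2 (Fin n)) := univ.filter (fun e => ¬ e.IsDiag)

lemma card_allPairs (n : ℕ) : (allPairs n).card = n.choose 2 := by
  rw [allPairs, ← Fintype.card_subtype]
  simpa using Sym2.card_subtype_not_diag (α := Fin n)

lemma graphSpace_iff {n m : ℕ} (E : Finset (Sym2 (Fin n))) :
    (E.card = m ∧ ∀ e ∈ E, ¬ e.IsDiag) ↔ E ∈ (allPairs n).powersetCard m := by
  rw [mem_powersetCard, allPairs]
  constructor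
  · rintro ⟨h1, h2⟩
    exact ⟨fun e he => mem_filter.2 ⟨mem_univ _, h2 e he⟩, h1⟩
  · rintro ⟨h1, h2⟩
    exact ⟨h2, fun e he => (mem_filter.1 (h1 he)).2⟩

noncomputable instance (n m : ℕ) : Fintype (GraphSpace n m) := by
  unfold GraphSpace
  classical
  infer_instance

lemma card_graphSpace_subtype (n m : ℕ) (P : Finset (Sym2 (Fin n)) → Prop)
    [DecidablePred P] :
    Nat.card {G : GraphSpace n m // P G.1}
      = (((allPairs n).powersetCard m).filter P).card := by
  classical
  have e : {G : GraphSpace n m // P G.1}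
      ≃ {E : Finset (Sym2 (Fin n)) // (E.card = m ∧ ∀ e ∈ E, ¬ e.IsDiag) ∧ P E} :=
    (Equiv.subtypeSubtypeEquivSubtypeInter _ P)
  rw [Nat.card_congr e, Nat.card_eq_fintype_card, Fintype.card_subtype]
  congr 1
  ext E
  simp [graphSpace_iff, mem_filter, and_comm]

lemma card_graphSpace (n m : ℕ) :
    Nat.card (GraphSpace n m) = (n.choose 2).choose m := by
  classical
  have e : GraphSpace n m ≃ {E // E ∈ (allPairs n).powersetCard m} :=
    Equiv.subtypeEquivRight fun E => graphSpace_iff E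
  rw [Nat.card_congr e, Nat.card_eq_fintype_card, Fintype.card_coe,
    card_powersetCard, card_allPairs]

def bichrom {n k : ℕ} (σ : Fin n → Fin k) : Finset (Sym2 (Fin n)) :=
  (allPairs n).filter (fun e => ¬ (e.map σ).IsDiag)

def fib {n k : ℕ} (σ : Fin n → Fin k) (i : Fin k) : Finset (Fin n) :=
  univ.filter (fun v => σ v = i)

lemma coloring_subset_bichrom {n k m : ℕ} (σ : Fin n → Fin k)
    (E : Finset (Sym2 (Fin n))) (hE : E ∈ (allPairs n).powersetCard m)
    (hc : IsColoring E σ) : E ∈ (bichrom σ).powersetCard m := by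
  rw [mem_powersetCard] at hE ⊢
  refine ⟨fun e he => ?_, hE.2⟩
  induction e with
  | h u v =>
    rw [bichrom, mem_filter]
    exact ⟨hE.1 he, by simpa using hc u v he⟩

lemma sum_choose_le_mono_card {n k : ℕ} (σ : Fin n → Fin k) :
    ∑ i : Fin k, ((fib σ i).card).choose 2
      ≤ ((allPairs n).filter (fun e => (Sym2.map σ e).IsDiag)).card := by
  classical
  have hsub : (univ : Finset (Fin k)).biUnion
      (fun i => (fib σ i).offDiag.image Sym2.mk.uncurry)
      ⊆ (allPairs n).filter (fun e => (Sym2.map σ e).IsDiag) := by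
    intro e he
    rw [mem_biUnion] at he
    obtain ⟨i, -, he⟩ := he
    rw [mem_image] at he
    obtain ⟨⟨u, v⟩, huv, rfl⟩ := he
    rw [mem_offDiag] at huv
    obtain ⟨hu, hv, hne⟩ := huv
    rw [fib, mem_filter] at hu hv
    rw [mem_filter, allPairs, mem_filter]
    refine ⟨⟨mem_univ _, by simpa using hne⟩, ?_⟩
    simp [Sym2.map_pair_eq, hu.2, hv.2]
  have hdisj : ∀ i ∈ (univ : Finset (Fin k)), ∀ j ∈ (univ : Finset (Fin k)), i ≠ j →
      Disjoint ((fib σ i).offDiag.image Sym2.mk.uncurry) ((fib σ j).offDiag.image Sym2.mk.uncurry) := by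
    intro i _ j _ hij
    rw [disjoint_left]
    intro e hei hej
    rw [mem_image] at hei hej
    obtain ⟨⟨u, v⟩, huv, he⟩ := hei
    obtain ⟨⟨u', v'⟩, huv', he'⟩ := hej
    simp only [fib, mem_offDiag, mem_filter, mem_univ, true_and] at huv huv'
    have : s(u, v) = s(u', v') := he.trans he'.symm
    rw [Sym2.eq_iff] at this
    apply hij
    rcases this with ⟨rfl, rfl⟩ | ⟨rfl, rfl⟩
    · exact huv.1.symm.trans huv'.1
    · exact huv.1.symm.trans huv'.2.1
  calc ∑ i : Fin k, ((fib σ i).card).choose 2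
      = ∑ i : Fin k, ((fib σ i).offDiag.image Sym2.mk.uncurry).card := by
        simp [Sym2.card_image_offDiag]
    _ = ((univ : Finset (Fin k)).biUnion (fun i => (fib σ i).offDiag.image Sym2.mk.uncurry)).card :=
        (card_biUnion hdisj).symm
    _ ≤ _ := card_le_card hsub

lemma bichrom_card_eq {n k : ℕ} (σ : Fin n → Fin k) :
    (bichrom σ).card
      + ((allPairs n).filter (fun e => (Sym2.map σ e).IsDiag)).card = (allPairs n).card := by
  classical
  rw [bichrom, add_comm]
  exact card_filter_add_card_filter_not (fun e => (Sym2.map σ e).IsDiag)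

lemma sum_fib_card {n k : ℕ} (σ : Fin n → Fin k) :
    ∑ i : Fin k, (fib σ i).card = n := by
  classical
  have h := Finset.card_eq_sum_card_fiberwise
    (fun (x : Fin n) (_ : x ∈ (univ : Finset (Fin n))) => mem_univ (σ x))
  simpa [fib, card_univ] using h.symm

/-- The real-valued upper bound on the number of bichromatic pairs. -/
lemma bichrom_card_le {n k : ℕ} (hk : 2 ≤ k) (σ : Fin n → Fin k) (i₀ : Fin k) :
    ((bichrom σ).card : ℝ)
      ≤ ((n:ℝ)^2 - (((fib σ i₀).card : ℝ)^2
          + ((n:ℝ) - ((fib σ i₀).card : ℝ))^2/((k:ℝ)-1)))/2 := by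
  classical
  have hkR : (2:ℝ) ≤ (k:ℝ) := by exact_mod_cast hk
  have hkm1 : (0:ℝ) < (k:ℝ) - 1 := by linarith
  set a : ℝ := ((fib σ i₀).card : ℝ) with ha
  -- cardinality identity
  have h1 : ((bichrom σ).card : ℝ)
      ≤ ((allPairs n).card : ℝ) - ∑ i : Fin k, (((fib σ i).card).choose 2 : ℝ) := by
    have he := bichrom_card_eq σ
    have hm := sum_choose_le_mono_card σ
    have hm' : (∑ i : Fin k, (((fib σ i).card).choose 2 : ℝ))
        ≤ (((allPairs n).filter (fun e => (Sym2.map σ e).IsDiag)).card : ℝ) := by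
      exact_mod_cast hm
    have he' : ((bichrom σ).card : ℝ)
        + (((allPairs n).filter (fun e => (Sym2.map σ e).IsDiag)).card : ℝ)
        = ((allPairs n).card : ℝ) := by exact_mod_cast he
    linarith
  have hN : ((allPairs n).card : ℝ) = (n:ℝ) * ((n:ℝ) - 1) / 2 := by
    rw [card_allPairs]
    exact_mod_cast Nat.cast_choose_two (K := ℝ) n
  have hchoose : ∀ i : Fin k, (((fib σ i).card).choose 2 : ℝ)
      = ((fib σ i).card : ℝ) * (((fib σ i).card : ℝ) - 1) / 2 := by
    intro i
    exact_mod_cast Nat.cast_choose_two (K := ℝ) ((fib σ i).card)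
  have hsumn : ∑ i : Fin k, ((fib σ i).card : ℝ) = (n:ℝ) := by
    exact_mod_cast congrArg (Nat.cast : ℕ → ℝ) (sum_fib_card σ)
  -- Cauchy-Schwarz on the other classes
  have hCS : ((n:ℝ) - a)^2 ≤ ((k:ℝ) - 1) * ∑ i ∈ univ.erase i₀, ((fib σ i).card : ℝ)^2 := by
    have h := sq_sum_le_card_mul_sum_sq
      (s := univ.erase i₀) (f := fun i => ((fib σ i).card : ℝ))
    have hcard : ((univ.erase i₀).card : ℝ) = (k:ℝ) - 1 := by
      rw [card_erase_of_mem (mem_univ _), card_univ]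
      simp
      rw [Nat.cast_sub (by omega)]
      simp
    have hsum' : ∑ i ∈ univ.erase i₀, ((fib σ i).card : ℝ) = (n:ℝ) - a := by
      rw [Finset.sum_erase_eq_sub (mem_univ i₀), hsumn]
    rw [hsum', hcard] at h
    exact h
  have hsq : a^2 + ((n:ℝ) - a)^2/((k:ℝ)-1) ≤ ∑ i : Fin k, ((fib σ i).card : ℝ)^2 := by
    have hsplit : ∑ i : Fin k, ((fib σ i).card : ℝ)^2
        = a^2 + ∑ i ∈ univ.erase i₀, ((fib σ i).card : ℝ)^2 := by
      rw [ha]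
      rw [← Finset.add_sum_erase _ _ (mem_univ i₀)]
    rw [hsplit]
    have h2 : ((n:ℝ) - a)^2/((k:ℝ)-1) ≤ ∑ i ∈ univ.erase i₀, ((fib σ i).card : ℝ)^2 := by
      rw [div_le_iff₀ hkm1]
      nlinarith [hCS]
    linarith
  -- put it together
  have hsum2 : ∑ i : Fin k, (((fib σ i).card).choose 2 : ℝ)
      = (∑ i : Fin k, ((fib σ i).card : ℝ)^2 - (n:ℝ))/2 := by
    rw [Finset.sum_congr rfl (fun i _ => hchoose i), ← hsumn]
    calc ∑ i : Fin k, ((fib σ i).card : ℝ) * (((fib σ i).card : ℝ) - 1) / 2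
        = ∑ i : Fin k, (((fib σ i).card : ℝ)^2 - ((fib σ i).card : ℝ))/2 :=
          Finset.sum_congr rfl (fun i _ => by ring)
      _ = (∑ i : Fin k, (((fib σ i).card : ℝ)^2 - ((fib σ i).card : ℝ)))/2 :=
          (Finset.sum_div _ _ _).symm
      _ = _ := by rw [Finset.sum_sub_distrib]
  linarith [h1, hN, hsum2, hsq]

lemma prob_nonneg {Ω : Type*} (p : Ω → Prop) : 0 ≤ prob p := by
  unfold prob; positivity

lemma prob_compl {Ω : Type*} [Finite Ω] (h : Nat.card Ω ≠ 0) (p : Ω → Prop) :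
    prob p = 1 - prob (fun x => ¬ p x) := by
  classical
  cases nonempty_fintype Ω
  unfold prob
  rw [Nat.card_eq_fintype_card, Nat.card_eq_fintype_card, Nat.card_eq_fintype_card]
  rw [Fintype.card_subtype, Fintype.card_subtype]
  have hle : (univ.filter p).card + (univ.filter (fun x => ¬ p x)).card
      = Fintype.card Ω := card_filter_add_card_filter_not p
  have h0 : (0:ℝ) < Fintype.card Ω := by
    rw [Nat.card_eq_fintype_card] at h
    exact_mod_cast Nat.pos_of_ne_zero h
  have hcast : ((univ.filter (fun x => p x)).card : ℝ)
      = (Fintype.card Ω : ℝ) - ((univ.filter (fun x => ¬ p x)).card : ℝ) := by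
    have : (univ.filter (fun x => p x)).card = (univ.filter p).card := rfl
    rw [this, eq_sub_iff_add_eq]
    exact_mod_cast congrArg Nat.cast hle
  rw [hcast]
  field_simp

end Aux
section MB
open Finset

lemma main_bound (k : ℕ) (hk2 : 2 ≤ k) (d X : ℝ) (hd1 : 1 ≤ d) (hX0 : 0 < X)
    (hkey : Real.log k + d/2 * (Real.log (1 - 1/k) - (1/(k*X))^2) ≤ -(1/k))
    (n : ℕ) (h2 : 2 ≤ n) (hnd : (2*d+2 : ℝ) ≤ n) :
    (Nat.card (GraphSpace n ⌈d * n / 2⌉₊) ≠ 0) ∧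
    prob (fun G : GraphSpace n ⌈d * n / 2⌉₊ =>
      ¬ (∀ σ : Fin n → Fin k, IsColoring G.1 σ →
          ∀ i : Fin k,
            |(Nat.card {v : Fin n // σ v = i} : ℝ) - n / k| ≤ n / (k * X)))
      ≤ Real.exp (2*d) * Real.exp (-(1/k)) ^ n := by
  classical
  have hk0 : (0:ℝ) < k := by
    have : (2:ℝ) ≤ k := by exact_mod_cast hk2
    linarith
  have hkRR : (2:ℝ) ≤ k := by exact_mod_cast hk2
  have hn2 : (2:ℝ) ≤ n := by exact_mod_cast h2
  have hn0 : (0:ℝ) < n := by linarith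
  have hn1 : (0:ℝ) < (n:ℝ) - 1 := by linarith
  have hd0 : (0:ℝ) < d := by linarith
  set m := ⌈d * n / 2⌉₊ with hm
  set N := n.choose 2 with hN
  set s : ℝ := 1/(k*X) with hs
  have hs0 : 0 < s := by positivity
  set r : ℝ := (1 - 1/k) * Real.exp (-s^2) with hr
  have h1k : (0:ℝ) < 1 - 1/k := by
    rw [sub_pos, div_lt_one hk0]; linarith
  have hr0 : 0 < r := by positivity
  have hmlow : d * n / 2 ≤ (m:ℝ) := Nat.le_ceil _
  have hmup : (m:ℝ) ≤ d * n := by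
    have h1 : (m:ℝ) < d * n / 2 + 1 := Nat.ceil_lt_add_one (by positivity)
    nlinarith
  have hNval : (N:ℝ) = n * ((n:ℝ) - 1) / 2 := by
    rw [hN]; exact_mod_cast Nat.cast_choose_two (K := ℝ) n
  have hmN : m ≤ N := by
    rw [← Nat.cast_le (α := ℝ), hNval]
    nlinarith
  have hN0' : (0:ℝ) < N := by rw [hNval]; nlinarith
  have hN0 : 0 < N := by exact_mod_cast hN0'
  have hcardΩ : Nat.card (GraphSpace n m) = N.choose m := card_graphSpace n m
  have hch0 : 0 < N.choose m := Nat.choose_pos hmN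
  constructor
  · rw [hcardΩ]; exact hch0.ne'
  -- the bad-coloring predicate
  set Bad : (Fin n → Fin k) → Prop := fun σ =>
    ∃ i, ¬ |((fib σ i).card : ℝ) - n / k| ≤ n / (k * X) with hBad
  set Tbad : Finset (Fin n → Fin k) := univ.filter Bad with hTbad
  have hfib : ∀ (σ : Fin n → Fin k) (i : Fin k),
      (Nat.card {v : Fin n // σ v = i}) = (fib σ i).card := by
    intro σ i
    rw [Nat.card_eq_fintype_card, Fintype.card_subtype]
    rfl
  set P : Finset (Sym2 (Fin n)) → Prop := fun E =>
    ¬ (∀ σ : Fin n → Fin k, IsColoring E σ →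
        ∀ i : Fin k,
          |(Nat.card {v : Fin n // σ v = i} : ℝ) - n / k| ≤ n / (k * X)) with hP
  set S := (allPairs n).powersetCard m with hS
  have hnum : Nat.card {G : GraphSpace n m //
      ¬ (∀ σ : Fin n → Fin k, IsColoring G.1 σ →
          ∀ i : Fin k,
            |(Nat.card {v : Fin n // σ v = i} : ℝ) - n / k| ≤ n / (k * X))}
      = (S.filter P).card := card_graphSpace_subtype n m P
  -- union bound
  have hsub : S.filter P ⊆ Tbad.biUnion (fun σ => S.filter (fun E => IsColoring E σ)) := by
    intro E hE
    rw [mem_filter] at hE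
    obtain ⟨hES, hPE⟩ := hE
    rw [hP] at hPE
    push_neg at hPE
    obtain ⟨σ, hcol, i, hdev⟩ := hPE
    rw [mem_biUnion]
    refine ⟨σ, ?_, ?_⟩
    · rw [hTbad, mem_filter]
      refine ⟨mem_univ _, ⟨i, not_le.mpr ?_⟩⟩
      rwa [hfib] at hdev
    · rw [mem_filter]; exact ⟨hES, hcol⟩
  have hstep2 : (S.filter P).card ≤ ∑ σ ∈ Tbad, ((bichrom σ).card).choose m := by
    calc (S.filter P).card
        ≤ (Tbad.biUnion (fun σ => S.filter (fun E => IsColoring E σ))).card :=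
          card_le_card hsub
      _ ≤ ∑ σ ∈ Tbad, (S.filter (fun E => IsColoring E σ)).card := card_biUnion_le
      _ ≤ ∑ σ ∈ Tbad, ((bichrom σ).card).choose m := by
          apply sum_le_sum
          intro σ _
          rw [← card_powersetCard]
          apply card_le_card
          intro E hE
          rw [mem_filter] at hE
          exact coloring_subset_bichrom σ E hE.1 hE.2
  -- per-sigma real bound
  set W : ℝ := (r * ((n:ℝ)/((n:ℝ)-1)))^m with hW
  have hW0 : 0 ≤ W := by positivity
  have hperσ : ∀ σ ∈ Tbad, (((bichrom σ).card.choose m : ℕ) : ℝ) / (N.choose m : ℝ) ≤ W := by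
    intro σ hσ
    rw [hTbad, mem_filter, hBad] at hσ
    obtain ⟨-, i₀, hdev⟩ := hσ
    push_neg at hdev
    set a : ℝ := ((fib σ i₀).card : ℝ) with ha
    have han : a ≤ n := by
      rw [ha]
      exact_mod_cast card_le_card (subset_univ (fib σ i₀)) |>.trans (le_of_eq (card_univ.trans (Fintype.card_fin n)))
    have ha0 : 0 ≤ a := by positivity
    have hFN : (bichrom σ).card ≤ N := by
      rw [hN, ← card_allPairs]
      exact card_le_card (filter_subset _ _)
    have hratio := choose_ratio_le N (bichrom σ).card m hFN hmN hN0
    have hFn := bichrom_card_le hk2 σ i₀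
    set α : ℝ := a / n with hα
    set Q : ℝ := α^2 + (1-α)^2/((k:ℝ)-1) with hQ
    have hdev' : s ≤ |α - 1/k| := by
      have h1 : (n:ℝ) / (k*X) < |a - n/k| := hdev
      have h2 : a - (n:ℝ)/k = n * (α - 1/k) := by
        rw [hα]; field_simp
      rw [h2, abs_mul, abs_of_pos hn0] at h1
      rw [hs]
      have h3 : (n:ℝ) * (1/(k*X)) < n * |α - 1/k| := by
        calc (n:ℝ) * (1/(k*X)) = n/(k*X) := by ring
          _ < n * |α - 1/k| := h1
      exact le_of_lt ((mul_lt_mul_iff_right₀ hn0).mp h3)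
    have hQbound : 1 - Q ≤ (1 - 1/k) * Real.exp (-s^2) :=
      one_sub_q_bound k hk2 α s hs0.le hdev'
    have hQn : Q * (n:ℝ)^2 = a^2 + ((n:ℝ) - a)^2/((k:ℝ)-1) := by
      rw [hQ, hα]
      have hkm1 : ((k:ℝ)-1) ≠ 0 := by
        have : (1:ℝ) < k := by linarith
        intro h; nlinarith
      field_simp
    have hFoverN : ((bichrom σ).card : ℝ) / N ≤ (1 - Q) * ((n:ℝ)/((n:ℝ)-1)) := by
      rw [div_le_iff₀ hN0']
      have hid : (1 - Q) * ((n:ℝ)/((n:ℝ)-1)) * (N:ℝ) = (1-Q) * (n:ℝ)^2/2 := by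
        rw [hNval]
        field_simp
      rw [hid]
      nlinarith [hFn, hQn]
    have hFoverN2 : ((bichrom σ).card : ℝ) / N ≤ r * ((n:ℝ)/((n:ℝ)-1)) := by
      calc ((bichrom σ).card : ℝ) / N ≤ (1 - Q) * ((n:ℝ)/((n:ℝ)-1)) := hFoverN
        _ ≤ r * ((n:ℝ)/((n:ℝ)-1)) := by
            apply mul_le_mul_of_nonneg_right _ (by positivity)
            rw [hr]; exact hQbound
    calc (((bichrom σ).card.choose m : ℕ) : ℝ) / (N.choose m : ℝ)
        ≤ (((bichrom σ).card : ℝ)/(N:ℝ))^m := hratio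
      _ ≤ (r * ((n:ℝ)/((n:ℝ)-1)))^m := by
          apply pow_le_pow_left₀ (by positivity) hFoverN2
  -- sum up
  have hprob : prob (fun G : GraphSpace n m =>
      ¬ (∀ σ : Fin n → Fin k, IsColoring G.1 σ →
          ∀ i : Fin k,
            |(Nat.card {v : Fin n // σ v = i} : ℝ) - n / k| ≤ n / (k * X)))
      ≤ (k:ℝ)^n * W := by
    unfold prob
    rw [hnum, hcardΩ]
    have hsum : ((S.filter P).card : ℝ) ≤ ∑ σ ∈ Tbad, (((bichrom σ).card).choose m : ℝ) := by
      exact_mod_cast hstep2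
    have hchR : (0:ℝ) < (N.choose m : ℝ) := by exact_mod_cast hch0
    rw [div_le_iff₀ hchR]
    calc ((S.filter P).card : ℝ)
        ≤ ∑ σ ∈ Tbad, (((bichrom σ).card).choose m : ℝ) := hsum
      _ ≤ ∑ σ ∈ Tbad, W * (N.choose m : ℝ) := by
          apply sum_le_sum
          intro σ hσ
          have := hperσ σ hσ
          rw [div_le_iff₀ hchR] at this
          exact this
      _ = (Tbad.card : ℝ) * (W * (N.choose m : ℝ)) := by
          rw [sum_const, nsmul_eq_mul]
      _ ≤ (k:ℝ)^n * W * (N.choose m : ℝ) := by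
          have hTcard : (Tbad.card : ℝ) ≤ (k:ℝ)^n := by
            have h1 : Tbad.card ≤ k^n := by
              calc Tbad.card ≤ (univ : Finset (Fin n → Fin k)).card := card_filter_le _ _
                _ = k^n := by
                    rw [card_univ]
                    simp [Fintype.card_fun]
            exact_mod_cast h1
          have := mul_le_mul_of_nonneg_right hTcard (by positivity : (0:ℝ) ≤ W * (N.choose m : ℝ))
          calc (Tbad.card : ℝ) * (W * (N.choose m : ℝ))
              ≤ (k:ℝ)^n * (W * (N.choose m : ℝ)) := this
            _ = (k:ℝ)^n * W * (N.choose m : ℝ) := by ring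
  -- numeric endgame
  have hfinal : (k:ℝ)^n * W ≤ Real.exp (2*d) * Real.exp (-(1/k)) ^ n := by
    set L := Real.log (k:ℝ) with hLdef
    have hkexp : (k:ℝ) = Real.exp L := (Real.exp_log hk0).symm
    have hWsplit : W = r^m * ((n:ℝ)/((n:ℝ)-1))^m := by rw [hW, mul_pow]
    -- bound on (n/(n-1))^m
    have hnn1 : (n:ℝ)/((n:ℝ)-1) = 1 + 1/((n:ℝ)-1) := by field_simp; ring
    have hb1 : ((n:ℝ)/((n:ℝ)-1))^m ≤ Real.exp (2*d) := by
      have he : (n:ℝ)/((n:ℝ)-1) ≤ Real.exp (1/((n:ℝ)-1)) := by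
        rw [hnn1]
        have := Real.add_one_le_exp (1/((n:ℝ)-1))
        linarith
      calc ((n:ℝ)/((n:ℝ)-1))^m ≤ (Real.exp (1/((n:ℝ)-1)))^m :=
            pow_le_pow_left₀ (by positivity) he m
        _ = Real.exp ((m:ℝ) * (1/((n:ℝ)-1))) := by
            rw [← Real.exp_nat_mul]
        _ ≤ Real.exp (2*d) := by
            apply Real.exp_le_exp.mpr
            rw [mul_one_div, div_le_iff₀ hn1]
            nlinarith
    -- bound on r^m
    have hlogr : Real.log r = Real.log (1 - 1/k) - s^2 := by
      rw [hr, Real.log_mul h1k.ne' (Real.exp_ne_zero _), Real.log_exp]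
      ring
    have hlogr_neg : Real.log r < 0 := by
      rw [hlogr]
      have h1 : Real.log (1 - 1/k) < 0 := Real.log_neg h1k (by
        rw [sub_lt_self_iff]; positivity)
      nlinarith [hs0]
    have hb2 : r^m ≤ Real.exp (d*n/2 * Real.log r) := by
      have : r^m = Real.exp ((m:ℝ) * Real.log r) := by
        rw [Real.exp_nat_mul, Real.exp_log hr0]
      rw [this]
      apply Real.exp_le_exp.mpr
      exact mul_le_mul_of_nonpos_right hmlow hlogr_neg.le
    have hkn : (k:ℝ)^n = Real.exp ((n:ℝ) * L) := by
      rw [hkexp, ← Real.exp_nat_mul]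
    calc (k:ℝ)^n * W = Real.exp ((n:ℝ)*L) * (r^m * ((n:ℝ)/((n:ℝ)-1))^m) := by
          rw [hkn, hWsplit]
      _ ≤ Real.exp ((n:ℝ)*L) * (Real.exp (d*n/2 * Real.log r) * Real.exp (2*d)) := by
          apply mul_le_mul_of_nonneg_left _ (Real.exp_pos _).le
          exact mul_le_mul hb2 hb1 (by positivity) (Real.exp_pos _).le
      _ = Real.exp ((n:ℝ)*L + d*n/2 * Real.log r + 2*d) := by
          rw [← Real.exp_add, ← Real.exp_add]
          ring_nf
      _ ≤ Real.exp ((n:ℝ) * (-(1/k)) + 2*d) := by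
          apply Real.exp_le_exp.mpr
          have hkey' : L + d/2 * Real.log r ≤ -(1/k) := by
            rw [hlogr]; exact hkey
          have := mul_le_mul_of_nonneg_left hkey' hn0.le
          nlinarith [this]
      _ = Real.exp (2*d) * Real.exp (-(1/k)) ^ n := by
          rw [Real.exp_add, ← Real.exp_nat_mul]
          ring
  calc prob _ ≤ (k:ℝ)^n * W := hprob
    _ ≤ Real.exp (2*d) * Real.exp (-(1/k)) ^ n := hfinal
end MB
section Main
open Finset

theorem statement4 :
    ∃ k₀ : ℕ, ∀ k : ℕ, k₀ ≤ k → ∀ c : ℝ, 0 ≤ c → c ≤ 4 →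
      ∀ d : ℝ, d = 2 * k * Real.log k - Real.log k - c →
      Tendsto (fun n : ℕ =>
          prob (fun G : GraphSpace n ⌈d * n / 2⌉₊ =>
            ∀ σ : Fin n → Fin k, IsColoring G.1 σ →
              ∀ i : Fin k,
                |(Nat.card {v : Fin n // σ v = i} : ℝ) - n / k| ≤
                  n / (k * Real.log k ^ ((1 : ℝ) / 3))))
        atTop (nhds 1) := by
  classical
  refine ⟨⌈Real.exp 1000⌉₊ + 2, fun k hk c hc0 hc4 d hd => ?_⟩
  have hkR : Real.exp 1000 ≤ (k:ℝ) := by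
    have h1 : Real.exp 1000 ≤ (⌈Real.exp 1000⌉₊ : ℝ) := Nat.le_ceil _
    have h2 : (⌈Real.exp 1000⌉₊ : ℝ) ≤ (k:ℝ) := by
      exact_mod_cast le_trans (Nat.le_add_right _ 2) hk
    linarith
  have hexp : (1000 : ℝ) + 1 ≤ Real.exp 1000 := by
    linarith [Real.add_one_le_exp (1000:ℝ)]
  have hk0 : (0:ℝ) < k := by linarith
  have hk2 : 2 ≤ k := by
    by_contra h
    push_neg at h
    interval_cases k <;> simp_all <;> linarith
  set L := Real.log (k:ℝ) with hLdef
  have hL : (1000:ℝ) ≤ L := by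
    have := Real.log_le_log (Real.exp_pos 1000) hkR
    rwa [Real.log_exp] at this
  have hLk : L ≤ k := by
    have := Real.log_le_sub_one_of_pos hk0
    linarith
  set X := L ^ ((1:ℝ)/3) with hXdef
  have hX0 : 0 < X := Real.rpow_pos_of_pos (by linarith) _
  set s : ℝ := 1/(k*X) with hsdef
  have hs0 : 0 < s := by positivity
  have hd_pos : k * L ≤ d := by rw [hd]; nlinarith
  have hd1 : (1:ℝ) ≤ d := by nlinarith
  -- the key inequality
  have hkey : L + d/2 * (Real.log (1 - 1/k) - s^2) ≤ -(1/k) :=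
    key_ineq k hkR c hc0 hc4 d hd
  -- the eventual bound on the bad probability
  have hmain : ∀ n : ℕ, 2 ≤ n → (2*d+2 : ℝ) ≤ n →
      (Nat.card (GraphSpace n ⌈d * n / 2⌉₊) ≠ 0) ∧
      prob (fun G : GraphSpace n ⌈d * n / 2⌉₊ =>
        ¬ (∀ σ : Fin n → Fin k, IsColoring G.1 σ →
            ∀ i : Fin k,
              |(Nat.card {v : Fin n // σ v = i} : ℝ) - n / k| ≤
                n / (k * Real.log k ^ ((1 : ℝ) / 3))))
        ≤ Real.exp (2*d) * Real.exp (-(1/k)) ^ n := by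
    intro n h2 hnd
    exact main_bound k hk2 d X hd1 hX0 hkey n h2 hnd
  -- eventual hypotheses
  have hev : ∀ᶠ n : ℕ in atTop, 2 ≤ n ∧ (2*d+2 : ℝ) ≤ n := by
    have h1 : ∀ᶠ n : ℕ in atTop, 2 ≤ n := eventually_ge_atTop 2
    have h2 : ∀ᶠ n : ℕ in atTop, (2*d+2 : ℝ) ≤ n := by
      have := tendsto_natCast_atTop_atTop (R := ℝ)
      exact this.eventually_ge_atTop (2*d+2)
    exact h1.and h2
  -- rewrite prob as 1 - prob bad
  have heq : ∀ᶠ n : ℕ in atTop,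
      prob (fun G : GraphSpace n ⌈d * n / 2⌉₊ =>
            ∀ σ : Fin n → Fin k, IsColoring G.1 σ →
              ∀ i : Fin k,
                |(Nat.card {v : Fin n // σ v = i} : ℝ) - n / k| ≤
                  n / (k * Real.log k ^ ((1 : ℝ) / 3)))
      = 1 - prob (fun G : GraphSpace n ⌈d * n / 2⌉₊ =>
          ¬ (∀ σ : Fin n → Fin k, IsColoring G.1 σ →
              ∀ i : Fin k,
                |(Nat.card {v : Fin n // σ v = i} : ℝ) - n / k| ≤
                  n / (k * Real.log k ^ ((1 : ℝ) / 3)))) := by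
    filter_upwards [hev] with n hn
    exact prob_compl ((hmain n hn.1 hn.2).1) _
  rw [tendsto_congr' heq]
  have : Tendsto (fun n : ℕ =>
      prob (fun G : GraphSpace n ⌈d * n / 2⌉₊ =>
          ¬ (∀ σ : Fin n → Fin k, IsColoring G.1 σ →
              ∀ i : Fin k,
                |(Nat.card {v : Fin n // σ v = i} : ℝ) - n / k| ≤
                  n / (k * Real.log k ^ ((1 : ℝ) / 3)))))
      atTop (nhds 0) := by
    have hub : Tendsto (fun n : ℕ => Real.exp (2*d) * Real.exp (-(1/k)) ^ n)
        atTop (nhds 0) := by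
      have h1 : Tendsto (fun n : ℕ => Real.exp (-(1/k)) ^ n) atTop (nhds 0) := by
        apply tendsto_pow_atTop_nhds_zero_of_lt_one (Real.exp_pos _).le
        rw [Real.exp_lt_one_iff]
        rw [neg_lt, neg_zero]
        positivity
      simpa using h1.const_mul (Real.exp (2*d))
    apply squeeze_zero' (g := fun n : ℕ => Real.exp (2*d) * Real.exp (-(1/k)) ^ n)
      (Eventually.of_forall fun n => prob_nonneg _) ?_ hub
    filter_upwards [hev] with n hn
    exact (hmain n hn.1 hn.2).2
  have := this.const_sub 1
  simpa using this
end Main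
end

section
/- There is a constant k_0 ∈ ℕ such that for every k ≥ k_0 and every d with 2k·ln k − ln k − 4 ≤ d ≤ 2k·ln k, the following holds for all sufficiently large n and every near-balanced σ: V → {1,...,k}: in the random multigraph G'(σ), letting T be the number of vertices v ∈ V for which there exists j ∈ {1,...,k}\{σ(v)} with e(v,V_j) > 100·ln k, we have P[T > n/(4k·ln k)] ≤ exp(−10n/k). -/
open Finset Nat

/-- The sample space of the random multigraph `G'(σ)`: `m` ordered pairs drawn
uniformly and independently from `{(u,v) : σ u ≠ σ v}`. -/
abbrev CondSpace (n m k : ℕ) (σ : Fin n → Fin k) : Type :=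
  {e : Fin m → Fin n × Fin n // ∀ i : Fin m, σ (e i).1 ≠ σ (e i).2}

/-- `e(A,B)`: the number of edges (with multiplicity) with one endpoint in `A`
and the other in `B`. -/
noncomputable def eSet {n m : ℕ} (e : Fin m → Fin n × Fin n) (A B : Set (Fin n)) : ℕ :=
  Nat.card {t : Fin m // ((e t).1 ∈ A ∧ (e t).2 ∈ B) ∨ ((e t).1 ∈ B ∧ (e t).2 ∈ A)}

/-- `σ` is near-balanced: every color class has size `n/k` up to `n/(k·(ln k)^{1/3})`. -/
def NearBalanced (n k : ℕ) (σ : Fin n → Fin k) : Prop :=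
  ∀ i : Fin k,
    |(Nat.card {v : Fin n // σ v = i} : ℝ) - n / k| ≤ n / (k * Real.log k ^ ((1 : ℝ) / 3))

lemma pow_self_le_factorial_mul_exp (b : ℕ) : (b:ℝ)^b ≤ (b ! : ℝ) * Real.exp b := by
  have h1 : (b:ℝ)^b / (b ! :ℝ) ≤ ∑ i ∈ range (b+1), (b:ℝ)^i / i ! := by
    apply Finset.single_le_sum (f := fun i => (b:ℝ)^i / i !)
    · intro i _; positivity
    · exact self_mem_range_succ b
  have h2 := Real.sum_le_exp_of_nonneg (x := (b:ℝ)) (by positivity) (b+1)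
  have h3 : (b:ℝ)^b / (b ! :ℝ) ≤ Real.exp b := h1.trans h2
  have hb : (0:ℝ) < b ! := by exact_mod_cast b.factorial_pos
  calc (b:ℝ)^b = ((b:ℝ)^b / (b ! :ℝ)) * b ! := by field_simp
    _ ≤ Real.exp b * b ! := by apply mul_le_mul_of_nonneg_right h3 hb.le
    _ = (b ! : ℝ) * Real.exp b := mul_comm _ _

lemma choose_le_epow (a b : ℕ) (hb : 0 < b) :
    (a.choose b : ℝ) ≤ (Real.exp 1 * a / b) ^ b := by
  have h1 : (a.choose b : ℝ) ≤ (a:ℝ)^b / (b ! : ℝ) := Nat.choose_le_pow_div b a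
  have hfac : (0:ℝ) < b ! := by exact_mod_cast b.factorial_pos
  have hbR : (0:ℝ) < b := by exact_mod_cast hb
  have h2 : (Real.exp 1 * a / b) ^ b = Real.exp b * (a:ℝ)^b / (b:ℝ)^b := by
    rw [div_pow, mul_pow, ← Real.exp_nat_mul]
    ring_nf
  rw [h2]
  refine h1.trans ?_
  rw [div_le_div_iff₀ hfac (by positivity)]
  calc (a:ℝ)^b * (b:ℝ)^b ≤ (a:ℝ)^b * ((b ! : ℝ) * Real.exp b) := by
        apply mul_le_mul_of_nonneg_left (pow_self_le_factorial_mul_exp b) (by positivity)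
    _ = Real.exp b * (a:ℝ)^b * (b ! : ℝ) := by ring

lemma count_fix {α : Type*} [Fintype α] [DecidableEq α] {m : ℕ} (P : α → Prop)
    [DecidablePred P] (I : Finset (Fin m)) :
    (univ.filter (fun e : Fin m → α => ∀ i ∈ I, P (e i))).card
      = (univ.filter P).card ^ I.card * (Fintype.card α) ^ (m - I.card) := by
  classical
  have h1 : (univ.filter (fun e : Fin m → α => ∀ i ∈ I, P (e i))).card
      = Fintype.card {e : Fin m → α // ∀ i, (fun i b => i ∈ I → P b) i (e i)} := by
    rw [Fintype.card_subtype]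
  rw [h1, Fintype.card_congr (Equiv.subtypePiEquivPi (p := fun i b => i ∈ I → P b)),
    Fintype.card_pi]
  have h2 : ∀ i : Fin m, Fintype.card {b : α // i ∈ I → P b}
      = if i ∈ I then (univ.filter P).card else Fintype.card α := by
    intro i
    by_cases hi : i ∈ I
    · simp only [hi, if_true]
      rw [Fintype.card_subtype]
      congr 1
      apply filter_congr
      intro b _
      simp [hi]
    · simp only [hi, if_false]
      rw [Fintype.card_subtype]
      simp
  calc ∏ i : Fin m, Fintype.card {b : α // i ∈ I → P b}
      = ∏ i : Fin m, (if i ∈ I then (univ.filter P).card else Fintype.card α) := by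
        exact Finset.prod_congr rfl (fun i _ => h2 i)
    _ = (univ.filter P).card ^ I.card * (Fintype.card α) ^ (m - I.card) := by
        rw [Finset.prod_ite, Finset.prod_const, Finset.prod_const]
        congr 2
        · rw [Finset.filter_mem_eq_inter, univ_inter]
        · have : univ.filter (fun i => ¬ i ∈ I) = Iᶜ := by
            ext i; simp
          rw [this, Finset.card_compl, Fintype.card_fin]

lemma count_main {α : Type*} [Fintype α] [DecidableEq α] (m s : ℕ) (P : α → Prop)
    [DecidablePred P] :
    (univ.filter (fun e : Fin m → α => s ≤ (univ.filter (fun i => P (e i))).card)).card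
      ≤ m.choose s * ((univ.filter P).card ^ s * (Fintype.card α) ^ (m - s)) := by
  classical
  have hsub : (univ.filter (fun e : Fin m → α => s ≤ (univ.filter (fun i => P (e i))).card))
      ⊆ (powersetCard s (univ : Finset (Fin m))).biUnion
        (fun I => univ.filter (fun e : Fin m → α => ∀ i ∈ I, P (e i))) := by
    intro e he
    rw [mem_filter] at he
    obtain ⟨I, hIsub, hIcard⟩ := Finset.exists_subset_card_eq he.2
    rw [mem_biUnion]
    refine ⟨I, ?_, ?_⟩
    · rw [mem_powersetCard]
      exact ⟨subset_univ _, hIcard⟩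
    · rw [mem_filter]
      exact ⟨mem_univ _, fun i hi => (mem_filter.1 (hIsub hi)).2⟩
  calc (univ.filter (fun e : Fin m → α => s ≤ (univ.filter (fun i => P (e i))).card)).card
      ≤ ((powersetCard s (univ : Finset (Fin m))).biUnion
        (fun I => univ.filter (fun e : Fin m → α => ∀ i ∈ I, P (e i)))).card :=
        Finset.card_le_card hsub
    _ ≤ ∑ I ∈ powersetCard s (univ : Finset (Fin m)),
        (univ.filter (fun e : Fin m → α => ∀ i ∈ I, P (e i))).card := Finset.card_biUnion_le
    _ ≤ ∑ _I ∈ powersetCard s (univ : Finset (Fin m)),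
        ((univ.filter P).card ^ s * (Fintype.card α) ^ (m - s)) := by
        apply Finset.sum_le_sum
        intro I hI
        rw [count_fix P I, (mem_powersetCard.1 hI).2]
    _ = m.choose s * ((univ.filter P).card ^ s * (Fintype.card α) ^ (m - s)) := by
        rw [Finset.sum_const, Finset.card_powersetCard, Finset.card_univ, Fintype.card_fin,
          smul_eq_mul]

lemma double_count {ι κ : Type*} [Fintype ι] [DecidableEq κ] (W : Finset κ) (Q : κ → ι → Prop)
    [∀ v i, Decidable (Q v i)]
    (h2 : ∀ i, (W.filter (fun v => Q v i)).card ≤ 2) :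
    ∑ v ∈ W, (univ.filter (fun i => Q v i)).card
      ≤ 2 * (univ.filter (fun i => ∃ v ∈ W, Q v i)).card := by
  classical
  have swap : ∑ v ∈ W, (univ.filter (fun i => Q v i)).card
      = ∑ i : ι, (W.filter (fun v => Q v i)).card := by
    simp only [Finset.card_filter]
    rw [Finset.sum_comm]
  rw [swap]
  have hzero : ∀ i ∈ univ.filter (fun i => ¬ ∃ v ∈ W, Q v i),
      (W.filter (fun v => Q v i)).card = 0 := by
    intro i hi
    rw [mem_filter] at hi
    rw [Finset.card_eq_zero, Finset.filter_eq_empty_iff]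
    intro v hv hQ
    exact hi.2 ⟨v, hv, hQ⟩
  calc ∑ i : ι, (W.filter (fun v => Q v i)).card
      = ∑ i ∈ univ.filter (fun i => ∃ v ∈ W, Q v i), (W.filter (fun v => Q v i)).card
        + ∑ i ∈ univ.filter (fun i => ¬ ∃ v ∈ W, Q v i), (W.filter (fun v => Q v i)).card := by
        rw [Finset.sum_filter_add_sum_filter_not]
    _ = ∑ i ∈ univ.filter (fun i => ∃ v ∈ W, Q v i), (W.filter (fun v => Q v i)).card := by
        rw [Finset.sum_eq_zero hzero, add_zero]
    _ ≤ ∑ _i ∈ univ.filter (fun i => ∃ v ∈ W, Q v i), 2 := Finset.sum_le_sum (fun i _ => h2 i)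
    _ = 2 * (univ.filter (fun i => ∃ v ∈ W, Q v i)).card := by
        rw [Finset.sum_const, smul_eq_mul, mul_comm]

lemma k0facts (k : ℕ) (hk : 3^1000 ≤ k) : (100:ℝ) ≤ k ∧ (1000:ℝ) ≤ Real.log k := by
  have hcast : ((3:ℝ))^1000 ≤ (k:ℝ) := by
    rw [show ((3:ℝ))^1000 = ((3^1000 : ℕ) : ℝ) by rw [Nat.cast_pow]; norm_num]
    exact_mod_cast hk
  have h35 : (100:ℝ) ≤ (3:ℝ)^1000 := by
    calc (100:ℝ) ≤ 3^5 := by norm_num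
      _ ≤ 3^1000 := pow_le_pow_right₀ (by norm_num) (by norm_num)
  refine ⟨le_trans h35 hcast, ?_⟩
  have h3 : Real.exp 1 ≤ 3 := by
    have := Real.exp_one_lt_d9; linarith
  have hl3 : (1:ℝ) ≤ Real.log 3 := by
    rw [Real.le_log_iff_exp_le (by norm_num)]
    simpa using h3
  have hlog : Real.log ((3:ℝ)^1000) ≤ Real.log k :=
    Real.log_le_log (by positivity) hcast
  have : (1000:ℝ) ≤ Real.log ((3:ℝ)^1000) := by
    rw [Real.log_pow]
    have : ((1000:ℕ):ℝ) * 1 ≤ ((1000:ℕ):ℝ) * Real.log 3 := by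
      apply mul_le_mul_of_nonneg_left hl3 (by positivity)
    simpa using this
  linarith


def Qp {n k : ℕ} (σ : Fin n → Fin k) (w : Fin n × Fin k) (q : Fin n × Fin n) : Prop :=
  (q.1 ∈ ({w.1} : Set (Fin n)) ∧ q.2 ∈ {u | σ u = w.2}) ∨
  (q.1 ∈ {u | σ u = w.2} ∧ q.2 ∈ ({w.1} : Set (Fin n)))


open Classical in
lemma main_count {n k : ℕ} (m t₀ s₀ : ℕ) (σ : Fin n → Fin k) (L : ℝ) (ht0pos : 0 < t₀)
    (hth : ∀ h : ℕ, (t₀:ℝ) * L < 2 * (h:ℝ) → s₀ ≤ h) :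
    (univ.filter (fun f : Fin m → {p : Fin n × Fin n // σ p.1 ≠ σ p.2} =>
        t₀ ≤ (univ.filter (fun v : Fin n => ∃ j : Fin k, j ≠ σ v ∧
          L < ((univ.filter (fun i : Fin m =>
            Qp σ (v,j) ((f i) : Fin n × Fin n))).card : ℝ))).card)).card
    ≤ (n*k).choose t₀ * (m.choose s₀ *
        ((2 * (t₀ * univ.sup (fun c : Fin k => (univ.filter (fun v => σ v = c)).card))) ^ s₀
          * (Fintype.card {p : Fin n × Fin n // σ p.1 ≠ σ p.2}) ^ (m - s₀))) := by
  classical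
  obtain ⟨Mx, hMxdef⟩ : ∃ Mx, Mx = univ.sup
      (fun c : Fin k => (univ.filter (fun v => σ v = c)).card) := ⟨_, rfl⟩
  rw [← hMxdef]
  -- Step A : inclusion in a union over W
  have hA : (univ.filter (fun f : Fin m → {p : Fin n × Fin n // σ p.1 ≠ σ p.2} =>
        t₀ ≤ (univ.filter (fun v : Fin n => ∃ j : Fin k, j ≠ σ v ∧
          L < ((univ.filter (fun i : Fin m =>
            Qp σ (v,j) ((f i) : Fin n × Fin n))).card : ℝ))).card))
      ⊆ (powersetCard t₀ (univ : Finset (Fin n × Fin k))).biUnion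
        (fun W => univ.filter (fun f : Fin m → {p : Fin n × Fin n // σ p.1 ≠ σ p.2} =>
          s₀ ≤ (univ.filter (fun i : Fin m =>
            ∃ w ∈ W, Qp σ w ((f i) : Fin n × Fin n))).card)) := by
    intro f hf
    rw [mem_filter] at hf
    have hf2 := hf.2
    set badverts := univ.filter (fun v : Fin n => ∃ j : Fin k, j ≠ σ v ∧
          L < ((univ.filter (fun i : Fin m =>
            Qp σ (v,j) ((f i) : Fin n × Fin n))).card : ℝ)) with hbad
    have hpickex : ∀ v ∈ badverts, ∃ j : Fin k, j ≠ σ v ∧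
        L < ((univ.filter (fun i : Fin m =>
            Qp σ (v,j) ((f i) : Fin n × Fin n))).card : ℝ) := by
      intro v hv
      exact (mem_filter.1 hv).2
    choose pick hpick1 hpick2 using hpickex
    set pk : Fin n → Fin n × Fin k := fun v =>
      if hv : v ∈ badverts then (v, pick v hv) else (v, σ v) with hpk
    have hpkinj : ∀ a ∈ badverts, ∀ b ∈ badverts, pk a = pk b → a = b := by
      intro a _ b _ hab
      have h1 : (pk a).1 = a := by rw [hpk]; by_cases h : a ∈ badverts <;> simp [h]
      have h2 : (pk b).1 = b := by rw [hpk]; by_cases h : b ∈ badverts <;> simp [h]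
      rw [← h1, ← h2, hab]
    have hW1card : (badverts.image pk).card = badverts.card :=
      Finset.card_image_of_injOn hpkinj
    obtain ⟨W, hWsub, hWcard⟩ : ∃ W ⊆ badverts.image pk, W.card = t₀ := by
      apply Finset.exists_subset_card_eq
      rw [hW1card]; exact hf2
    rw [mem_biUnion]
    refine ⟨W, mem_powersetCard.2 ⟨subset_univ _, hWcard⟩, mem_filter.2 ⟨mem_univ _, ?_⟩⟩
    -- each w in W is a bad (vertex, colour) pair
    have hcnt : ∀ w ∈ W, L < ((univ.filter (fun i : Fin m =>
        Qp σ w ((f i) : Fin n × Fin n))).card : ℝ) := by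
      intro w hw
      have hw1 := hWsub hw
      rw [mem_image] at hw1
      obtain ⟨v, hv, hveq⟩ := hw1
      have : pk v = (v, pick v hv) := by rw [hpk]; simp [hv]
      rw [← hveq, this]
      exact hpick2 v hv
    -- at most two pairs per edge
    have h2cond : ∀ i : Fin m, (W.filter (fun w => Qp σ w ((f i) : Fin n × Fin n))).card ≤ 2 := by
      intro i
      set q : Fin n × Fin n := ((f i) : Fin n × Fin n) with hq
      have hsub2 : W.filter (fun w => Qp σ w q) ⊆ {(q.1, σ q.2), (q.2, σ q.1)} := by
        intro w hw
        rcases (mem_filter.1 hw).2 with ⟨h1, h2⟩ | ⟨h1, h2⟩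
        · rw [Set.mem_singleton_iff] at h1
          rw [Set.mem_setOf_eq] at h2
          have : w = (q.1, σ q.2) := Prod.ext h1.symm h2.symm
          simp [this]
        · rw [Set.mem_setOf_eq] at h1
          rw [Set.mem_singleton_iff] at h2
          have : w = (q.2, σ q.1) := Prod.ext h2.symm h1.symm
          simp [this]
      calc (W.filter (fun w => Qp σ w q)).card
          ≤ ({(q.1, σ q.2), (q.2, σ q.1)} : Finset (Fin n × Fin k)).card :=
            Finset.card_le_card hsub2
        _ ≤ 2 := Finset.card_insert_le _ _ |>.trans (by simp)
    have hdc := double_count W (fun w i => Qp σ w ((f i) : Fin n × Fin n)) h2cond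
    -- strict lower bound on the sum
    have hWne : W.Nonempty := Finset.card_pos.1 (by rw [hWcard]; exact ht0pos)
    have hsum : (t₀:ℝ) * L < ((∑ w ∈ W, (univ.filter (fun i : Fin m =>
        Qp σ w ((f i) : Fin n × Fin n))).card : ℕ) : ℝ) := by
      push_cast
      have := Finset.sum_lt_sum_of_nonempty hWne hcnt
      rw [Finset.sum_const] at this
      rw [hWcard] at this
      simpa [nsmul_eq_mul, mul_comm] using this
    apply hth
    have h2hits : ((∑ w ∈ W, (univ.filter (fun i : Fin m =>
        Qp σ w ((f i) : Fin n × Fin n))).card : ℕ) : ℝ)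
        ≤ 2 * ((univ.filter (fun i : Fin m =>
          ∃ w ∈ W, Qp σ w ((f i) : Fin n × Fin n))).card : ℝ) := by
      exact_mod_cast hdc
    linarith
  -- Step B + C : counting each piece
  calc (univ.filter (fun f : Fin m → {p : Fin n × Fin n // σ p.1 ≠ σ p.2} =>
        t₀ ≤ (univ.filter (fun v : Fin n => ∃ j : Fin k, j ≠ σ v ∧
          L < ((univ.filter (fun i : Fin m =>
            Qp σ (v,j) ((f i) : Fin n × Fin n))).card : ℝ))).card)).card
      ≤ ((powersetCard t₀ (univ : Finset (Fin n × Fin k))).biUnion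
        (fun W => univ.filter (fun f : Fin m → {p : Fin n × Fin n // σ p.1 ≠ σ p.2} =>
          s₀ ≤ (univ.filter (fun i : Fin m =>
            ∃ w ∈ W, Qp σ w ((f i) : Fin n × Fin n))).card))).card :=
        Finset.card_le_card hA
    _ ≤ ∑ W ∈ powersetCard t₀ (univ : Finset (Fin n × Fin k)),
        (univ.filter (fun f : Fin m → {p : Fin n × Fin n // σ p.1 ≠ σ p.2} =>
          s₀ ≤ (univ.filter (fun i : Fin m =>
            ∃ w ∈ W, Qp σ w ((f i) : Fin n × Fin n))).card)).card := Finset.card_biUnion_le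
    _ ≤ ∑ _W ∈ powersetCard t₀ (univ : Finset (Fin n × Fin k)),
        (m.choose s₀ * ((2 * (t₀ * Mx)) ^ s₀
          * (Fintype.card {p : Fin n × Fin n // σ p.1 ≠ σ p.2}) ^ (m - s₀))) := by
        apply Finset.sum_le_sum
        intro W hW
        have hWcard : W.card = t₀ := (mem_powersetCard.1 hW).2
        have hcm := count_main (α := {p : Fin n × Fin n // σ p.1 ≠ σ p.2}) m s₀
          (fun a => ∃ w ∈ W, Qp σ w (a : Fin n × Fin n))
        refine hcm.trans ?_
        apply Nat.mul_le_mul_left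
        apply Nat.mul_le_mul_right
        apply Nat.pow_le_pow_left
        -- bound the number of bad pairs
        have hinj : (univ.filter (fun a : {p : Fin n × Fin n // σ p.1 ≠ σ p.2} =>
            ∃ w ∈ W, Qp σ w (a : Fin n × Fin n))).card
            ≤ (univ.filter (fun q : Fin n × Fin n => ∃ w ∈ W, Qp σ w q)).card := by
          apply Finset.card_le_card_of_injOn
            (f := fun a : {p : Fin n × Fin n // σ p.1 ≠ σ p.2} => (a : Fin n × Fin n))
          · intro a ha
            rw [Finset.mem_coe, mem_filter] at ha ⊢
            exact ⟨mem_univ _, ha.2⟩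
          · intro a _ b _ hab
            exact Subtype.ext hab
        refine hinj.trans ?_
        have hsub : (univ.filter (fun q : Fin n × Fin n => ∃ w ∈ W, Qp σ w q))
            ⊆ W.biUnion (fun w => ({w.1} ×ˢ (univ.filter (fun v => σ v = w.2)))
              ∪ ((univ.filter (fun v => σ v = w.2)) ×ˢ {w.1})) := by
          intro q hq
          obtain ⟨w, hw, hQ⟩ := (mem_filter.1 hq).2
          rw [mem_biUnion]
          refine ⟨w, hw, ?_⟩
          rcases hQ with ⟨h1, h2⟩ | ⟨h1, h2⟩
          · rw [Set.mem_singleton_iff] at h1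
            rw [Set.mem_setOf_eq] at h2
            apply Finset.mem_union_left
            rw [Finset.mem_product]
            exact ⟨by simp [h1], mem_filter.2 ⟨mem_univ _, h2⟩⟩
          · rw [Set.mem_setOf_eq] at h1
            rw [Set.mem_singleton_iff] at h2
            apply Finset.mem_union_right
            rw [Finset.mem_product]
            exact ⟨mem_filter.2 ⟨mem_univ _, h1⟩, by simp [h2]⟩
        refine (Finset.card_le_card hsub).trans ?_
        refine Finset.card_biUnion_le.trans ?_
        have hone : ∀ w ∈ W, (({w.1} ×ˢ (univ.filter (fun v => σ v = w.2)))
              ∪ ((univ.filter (fun v => σ v = w.2)) ×ˢ {w.1})).card ≤ 2 * Mx := by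
          intro w _
          have hfw : (univ.filter (fun v => σ v = w.2)).card ≤ Mx := by
            rw [hMxdef]
            exact Finset.le_sup (f := fun c : Fin k => (univ.filter (fun v => σ v = c)).card)
              (mem_univ w.2)
          calc (({w.1} ×ˢ (univ.filter (fun v => σ v = w.2)))
              ∪ ((univ.filter (fun v => σ v = w.2)) ×ˢ {w.1})).card
              ≤ ({w.1} ×ˢ (univ.filter (fun v => σ v = w.2))).card
                + ((univ.filter (fun v => σ v = w.2)) ×ˢ ({w.1} : Finset (Fin n))).card :=
                Finset.card_union_le _ _
            _ = (univ.filter (fun v => σ v = w.2)).card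
                + (univ.filter (fun v => σ v = w.2)).card := by
                rw [Finset.card_product, Finset.card_product, Finset.card_singleton]
                ring
            _ ≤ Mx + Mx := Nat.add_le_add hfw hfw
            _ = 2 * Mx := (two_mul Mx).symm
        calc ∑ w ∈ W, (({w.1} ×ˢ (univ.filter (fun v => σ v = w.2)))
              ∪ ((univ.filter (fun v => σ v = w.2)) ×ˢ {w.1})).card
            ≤ ∑ _w ∈ W, 2 * Mx := Finset.sum_le_sum hone
          _ = t₀ * (2 * Mx) := by rw [Finset.sum_const, smul_eq_mul, hWcard]
          _ = 2 * (t₀ * Mx) := by ring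
    _ = (n*k).choose t₀ * (m.choose s₀ * ((2 * (t₀ * Mx)) ^ s₀
          * (Fintype.card {p : Fin n × Fin n // σ p.1 ≠ σ p.2}) ^ (m - s₀))) := by
        rw [Finset.sum_const, Finset.card_powersetCard, Finset.card_univ, Fintype.card_prod,
          Fintype.card_fin, Fintype.card_fin, smul_eq_mul]

lemma inv5_le_exp_neg : (1/5:ℝ) ≤ Real.exp (-(3/2)) := by
  have he1 := Real.exp_one_lt_d9
  have hepos := Real.exp_pos 1
  have he3 : Real.exp 3 = Real.exp 1 * Real.exp 1 * Real.exp 1 := by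
    rw [← Real.exp_add, ← Real.exp_add]; norm_num
  have hsq : Real.exp (3/2) * Real.exp (3/2) = Real.exp 3 := by
    rw [← Real.exp_add]; norm_num
  have h32pos := Real.exp_pos (3/2)
  have he32 : Real.exp (3/2) ≤ 5 := by nlinarith
  rw [Real.exp_neg, show (1/5:ℝ) = (5:ℝ)⁻¹ by norm_num]
  exact inv_anti₀ h32pos he32

set_option maxHeartbeats 8000000 in
theorem statement13 :
    ∃ k₀ : ℕ, ∀ k : ℕ, k₀ ≤ k → ∀ d : ℝ,
      2 * k * Real.log k - Real.log k - 4 ≤ d → d ≤ 2 * k * Real.log k →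
      ∃ n₀ : ℕ, ∀ n : ℕ, n₀ ≤ n → ∀ σ : Fin n → Fin k, NearBalanced n k σ →
        prob (fun e : CondSpace n ⌈d * n / 2⌉₊ k σ =>
            n / (4 * k * Real.log k) <
              (Nat.card {v : Fin n // ∃ j : Fin k, j ≠ σ v ∧
                  100 * Real.log k < (eSet e.1 {v} {u | σ u = j} : ℝ)} : ℝ))
          ≤ Real.exp (-10 * n / k) := by
  classical
  refine ⟨3^1000, fun k hk d hd1 hd2 => ⟨k^3, fun n hn σ hσ => ?_⟩⟩
  set lk := Real.log k with hlkdef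
  -- basic numeric facts
  obtain ⟨hkR, hlk1000⟩ := k0facts k hk
  clear hk
  rw [← hlkdef] at hlk1000
  have hk0R : (0:ℝ) < k := by linarith
  have hlk0 : (0:ℝ) < lk := by linarith
  have hlkk : lk ≤ (k:ℝ) := by
    have := Real.log_le_sub_one_of_pos hk0R
    rw [← hlkdef] at this
    linarith
  have hnk3 : ((k:ℝ))^3 ≤ (n:ℝ) := by
    have : ((k^3 : ℕ) : ℝ) ≤ (n:ℝ) := by exact_mod_cast hn
    push_cast at this
    linarith
  have hn0 : (0:ℝ) < n := by
    have : (0:ℝ) < (k:ℝ)^3 := by positivity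
    linarith
  have hnk : (k:ℝ) ≤ n := by
    have h1 : k ≤ k^3 := Nat.le_self_pow (by norm_num) k
    exact_mod_cast le_trans h1 hn
  have hk1R : (1:ℝ) ≤ k := by linarith
  have hklk : ((k:ℝ)-1)*1000 ≤ ((k:ℝ)-1)*lk :=
    mul_le_mul_of_nonneg_left hlk1000 (by linarith)
  have hdklk : (k:ℝ)*lk ≤ d := by nlinarith
  have hnbig : 40*(k:ℝ)*lk ≤ n := by
    have h1 : 40*(k:ℝ)*lk ≤ 40*k*k := by nlinarith
    have h2 : 40*(k:ℝ)*k ≤ k^3 := by nlinarith [mul_nonneg (mul_nonneg hk0R.le hk0R.le) (by linarith : (0:ℝ) ≤ (k:ℝ) - 40)]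
    linarith
  -- the exponent of the ceiling
  set m := ⌈d * n / 2⌉₊ with hmdef
  set t₀ := ⌊(n:ℝ)/(4*k*lk)⌋₊ + 1 with ht0def
  set s₀ := ⌊25*(n:ℝ)/(2*k)⌋₊ + 1 with hs0def
  -- d bounds
  have hd0 : (0:ℝ) < d := by nlinarith
  have hmle : (m:ℝ) ≤ 1.1 * (k * lk * n) := by
    have h1 : (m:ℝ) < d*n/2 + 1 := Nat.ceil_lt_add_one (by positivity)
    have h2 : d*n/2 ≤ k*lk*n := by nlinarith
    nlinarith
  have hmge : k*lk*n/2 ≤ (m:ℝ) := by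
    have h1 : d*n/2 ≤ (m:ℝ) := Nat.le_ceil _
    have h2 := mul_le_mul_of_nonneg_right hdklk hn0.le
    linarith
  have hm0 : 0 < m := by
    have : (0:ℝ) < m := by nlinarith
    exact_mod_cast this
  -- t₀ bounds
  have hxval : (10:ℝ) ≤ (n:ℝ)/(4*k*lk) := by
    rw [le_div_iff₀ (by positivity)]
    linarith
  have ht0ge : (n:ℝ)/(4*k*lk) < (t₀:ℝ) := by
    rw [ht0def]
    push_cast
    exact Nat.lt_floor_add_one _
  have ht0le : (t₀:ℝ) ≤ 1.1 * ((n:ℝ)/(4*k*lk)) := by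
    have h1 : (t₀:ℝ) ≤ (n:ℝ)/(4*k*lk) + 1 := by
      rw [ht0def]
      push_cast
      have := Nat.floor_le (a := (n:ℝ)/(4*k*lk)) (by positivity)
      linarith
    nlinarith [hxval]
  have ht0pos : 0 < t₀ := Nat.succ_pos _
  -- s₀ bounds
  have hs0ge : 25*(n:ℝ)/(2*k) < (s₀:ℝ) := by
    rw [hs0def]
    push_cast
    have := Nat.lt_floor_add_one (25*(n:ℝ)/(2*k))
    calc 25*(n:ℝ)/(2*k) = 25*(n:ℝ)/(2*k) := rfl
      _ < ⌊25*(n:ℝ)/(2*k)⌋₊ + 1 := this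
  have hs0le : (s₀:ℝ) ≤ 13 * n / k := by
    have h1 : (s₀:ℝ) ≤ 25*(n:ℝ)/(2*k) + 1 := by
      rw [hs0def]
      push_cast
      have := Nat.floor_le (a := 25*(n:ℝ)/(2*k)) (by positivity)
      linarith
    have h2 : (1:ℝ) ≤ (n:ℝ)/(2*k) := by
      rw [le_div_iff₀ (by positivity)]
      nlinarith
    have : 25*(n:ℝ)/(2*k) + (n:ℝ)/(2*k) = 13*n/k := by ring
    linarith
  have hs0pos : 0 < s₀ := Nat.succ_pos _
  have hs0m : s₀ ≤ m := by
    have : (s₀:ℝ) ≤ (m:ℝ) := by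
      have h1 : 13 * (n:ℝ) / k ≤ k*lk*n/2 := by
        rw [div_le_div_iff₀ (by positivity) (by norm_num)]
        nlinarith
      linarith
    exact_mod_cast this

  clear_value lk m t₀ s₀
  have hk1 : 1 ≤ k := by exact_mod_cast (by linarith : (1:ℝ) ≤ (k:ℝ))
  -- fiber bounds
  have hfibcard : ∀ c : Fin k, (Nat.card {v : Fin n // σ v = c} : ℝ)
      = ((univ.filter (fun v => σ v = c)).card : ℝ) := by
    intro c
    rw [Nat.card_eq_fintype_card, Fintype.card_subtype]
  have hr10 : (10:ℝ) ≤ lk ^ ((1:ℝ)/3) := by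
    have h1000 : (1000:ℝ) ^ ((1:ℝ)/3) = 10 := by
      rw [show (1000:ℝ) = (10:ℝ) ^ (3:ℕ) by norm_num, ← Real.rpow_natCast (10:ℝ) 3,
        ← Real.rpow_mul (by norm_num)]
      norm_num
    rw [← h1000]
    exact Real.rpow_le_rpow (by norm_num) hlk1000 (by norm_num)
  have hfibbound : ∀ c : Fin k, |((univ.filter (fun v => σ v = c)).card : ℝ) - n / k|
      ≤ 0.1 * ((n:ℝ)/k) := by
    intro c
    have h1 := hσ c
    rw [hfibcard c] at h1
    rw [← hlkdef] at h1
    refine h1.trans ?_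
    have hden : (k:ℝ) * 10 ≤ k * lk ^ ((1:ℝ)/3) :=
      mul_le_mul_of_nonneg_left hr10 hk0R.le
    have h2 : (n:ℝ) / (k * lk ^ ((1:ℝ)/3)) ≤ n / (k*10) :=
      div_le_div_of_nonneg_left hn0.le (by positivity) hden
    have h3 : (n:ℝ)/(k*10) = 0.1 * ((n:ℝ)/k) := by
      field_simp
      ring
    linarith [h2, h3.ge, h3.le]
  have hfible : ∀ c : Fin k, ((univ.filter (fun v => σ v = c)).card : ℝ) ≤ 1.1 * ((n:ℝ)/k) := by
    intro c
    have := (abs_le.1 (hfibbound c)).2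
    have hnk' : (n:ℝ)/k + 0.1*((n:ℝ)/k) = 1.1*((n:ℝ)/k) := by ring
    linarith
  -- Mx : max fiber size
  obtain ⟨Mx, hMxdef⟩ : ∃ Mx, Mx = univ.sup (fun c : Fin k => (univ.filter (fun v => σ v = c)).card) :=
    ⟨_, rfl⟩
  have hMx : (Mx:ℝ) ≤ 1.1 * ((n:ℝ)/k) := by
    obtain ⟨c, _, hc⟩ := Finset.exists_mem_eq_sup (univ : Finset (Fin k))
      ⟨⟨0, by omega⟩, mem_univ _⟩ (fun c : Fin k => (univ.filter (fun v => σ v = c)).card)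
    rw [hMxdef, hc]
    exact hfible c
  -- sample space size
  obtain ⟨N, hNdef⟩ : ∃ N, N = Fintype.card {p : Fin n × Fin n // σ p.1 ≠ σ p.2} := ⟨_, rfl⟩
  have hNn : (N:ℝ) ≤ (n:ℝ)^2 := by
    have h1 : N ≤ Fintype.card (Fin n × Fin n) := hNdef ▸ Fintype.card_subtype_le _
    have h2 : Fintype.card (Fin n × Fin n) = n*n := by
      rw [Fintype.card_prod, Fintype.card_fin]
    rw [h2] at h1
    have : ((N:ℝ)) ≤ ((n*n : ℕ) : ℝ) := by exact_mod_cast h1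
    push_cast at this
    nlinarith
  have hNge : 0.9*(n:ℝ)^2 ≤ N := by
    obtain ⟨D, hDdef⟩ : ∃ D, D = (univ.filter (fun p : Fin n × Fin n => σ p.1 = σ p.2)).card :=
      ⟨_, rfl⟩
    have hDle : D ≤ n*n := by
      rw [hDdef]
      calc (univ.filter (fun p : Fin n × Fin n => σ p.1 = σ p.2)).card
          ≤ (univ : Finset (Fin n × Fin n)).card := Finset.card_filter_le _ _
        _ = n*n := by rw [Finset.card_univ, Fintype.card_prod, Fintype.card_fin]
    have hNeq : N = n*n - D := by
      rw [hNdef, hDdef, Fintype.card_subtype_compl, Fintype.card_prod, Fintype.card_fin,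
        Fintype.card_subtype]
    have hDsum : D ≤ ∑ c : Fin k, (univ.filter (fun v => σ v = c)).card
        * (univ.filter (fun v => σ v = c)).card := by
      rw [hDdef]
      have hsub : (univ.filter (fun p : Fin n × Fin n => σ p.1 = σ p.2))
          ⊆ univ.biUnion (fun c : Fin k =>
            (univ.filter (fun v => σ v = c)) ×ˢ (univ.filter (fun v => σ v = c))) := by
        intro p hp
        rw [mem_filter] at hp
        rw [mem_biUnion]
        exact ⟨σ p.1, mem_univ _, by
          rw [Finset.mem_product, mem_filter, mem_filter]
          exact ⟨⟨mem_univ _, rfl⟩, ⟨mem_univ _, hp.2.symm⟩⟩⟩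
      calc (univ.filter (fun p : Fin n × Fin n => σ p.1 = σ p.2)).card
          ≤ (univ.biUnion (fun c : Fin k =>
            (univ.filter (fun v => σ v = c)) ×ˢ (univ.filter (fun v => σ v = c)))).card :=
            Finset.card_le_card hsub
        _ ≤ ∑ c : Fin k, ((univ.filter (fun v => σ v = c))
            ×ˢ (univ.filter (fun v => σ v = c))).card := Finset.card_biUnion_le
        _ = ∑ c : Fin k, (univ.filter (fun v => σ v = c)).card
            * (univ.filter (fun v => σ v = c)).card := by
            apply Finset.sum_congr rfl
            intro c _
            rw [Finset.card_product]
    have hDreal : (D:ℝ) ≤ 0.1 * (n:ℝ)^2 := by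
      have h1 : (D:ℝ) ≤ ∑ c : Fin k, ((univ.filter (fun v => σ v = c)).card :ℝ)
          * ((univ.filter (fun v => σ v = c)).card : ℝ) := by
        have := hDsum
        exact_mod_cast this
      have h2 : ∑ c : Fin k, ((univ.filter (fun v => σ v = c)).card :ℝ)
          * ((univ.filter (fun v => σ v = c)).card : ℝ) ≤ ∑ _c : Fin k, 1.21 * ((n:ℝ)/k)^2 := by
        apply Finset.sum_le_sum
        intro c _
        have hc := hfible c
        have hpos : (0:ℝ) ≤ ((univ.filter (fun v => σ v = c)).card : ℝ) := by positivity
        nlinarith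
      have h3 : ∑ _c : Fin k, 1.21 * ((n:ℝ)/k)^2 = 1.21 * (n:ℝ)^2 / k := by
        rw [Finset.sum_const, Finset.card_univ, Fintype.card_fin, nsmul_eq_mul]
        field_simp
      have h4 : 1.21 * (n:ℝ)^2 / k ≤ 0.1 * (n:ℝ)^2 := by
        rw [div_le_iff₀ hk0R]
        have hh := mul_le_mul_of_nonneg_left hkR (by positivity : (0:ℝ) ≤ 0.1*(n:ℝ)^2)
        nlinarith [sq_nonneg (n:ℝ)]
      linarith
    have hcast : (N:ℝ) = (n:ℝ)*(n:ℝ) - D := by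
      rw [hNeq]
      push_cast [Nat.cast_sub hDle]
      ring
    linarith
  have hN0 : 0 < N := by
    have hnn : (0:ℝ) < (n:ℝ)^2 := by positivity
    have : (0:ℝ) < (N:ℝ) := by linarith
    exact_mod_cast this

  -- rewrite eSet as a filter count
  have hQe : ∀ (g : Fin m → Fin n × Fin n) (v : Fin n) (j : Fin k),
      eSet g {v} {u | σ u = j} = (univ.filter (fun i => Qp σ (v,j) (g i))).card := by
    intro g v j
    rw [eSet, Nat.card_eq_fintype_card, Fintype.card_subtype]
    congr 1
    apply filter_congr
    intro i _
    simp only [Qp]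
  -- the bad-event probability numerator
  have hth : ∀ h : ℕ, (t₀:ℝ) * (100 * lk) < 2 * (h:ℝ) → s₀ ≤ h := by
    intro h hh
    have h1 : (n:ℝ)/(4*k*lk) * (100*lk) ≤ (t₀:ℝ) * (100*lk) :=
      mul_le_mul_of_nonneg_right ht0ge.le (by positivity)
    have h2 : (n:ℝ)/(4*k*lk) * (100*lk) = 25*(n:ℝ)/k := by
      field_simp
      ring
    have h3 : 25*(n:ℝ)/(2*k) < (h:ℝ) := by
      have h5 : 25*(n:ℝ)/k < 2*h := by linarith
      have h6 : 25*(n:ℝ)/(2*k) = (25*(n:ℝ)/k)/2 := by ring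
      linarith
    rw [hs0def]
    have h4 : ⌊25*(n:ℝ)/(2*k)⌋₊ < h := by
      rw [Nat.floor_lt (by positivity)]
      exact h3
    exact Nat.succ_le_of_lt h4
  have hcmain := main_count (n := n) (k := k) m t₀ s₀ σ (100 * lk) ht0pos hth
  rw [← hMxdef, ← hNdef] at hcmain
  have hnum : Nat.card {e : CondSpace n m k σ //
      (n:ℝ) / (4 * (k:ℝ) * lk) < ((Nat.card {v : Fin n // ∃ j : Fin k, j ≠ σ v ∧
        100 * lk < ((eSet e.1 {v} {u | σ u = j} : ℕ) : ℝ)}) : ℝ)}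
      ≤ (n*k).choose t₀ * (m.choose s₀ * ((2 * (t₀ * Mx)) ^ s₀ * N ^ (m - s₀))) := by
    refine le_trans ?_ hcmain
    have hcongr : Nat.card {e : CondSpace n m k σ //
        (n:ℝ) / (4 * (k:ℝ) * lk) < ((Nat.card {v : Fin n // ∃ j : Fin k, j ≠ σ v ∧
          100 * lk < ((eSet e.1 {v} {u | σ u = j} : ℕ) : ℝ)}) : ℝ)}
        = Nat.card {f : Fin m → {p : Fin n × Fin n // σ p.1 ≠ σ p.2} //
        (n:ℝ) / (4 * (k:ℝ) * lk) < ((Nat.card {v : Fin n // ∃ j : Fin k, j ≠ σ v ∧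
          100 * lk < ((eSet (fun i => ((f i) : Fin n × Fin n)) {v} {u | σ u = j} : ℕ) : ℝ)}) : ℝ)} := by
      apply Nat.card_congr
      exact Equiv.subtypeEquiv
        (Equiv.subtypePiEquivPi (p := fun (_ : Fin m) (q : Fin n × Fin n) => σ q.1 ≠ σ q.2))
        (fun e => Iff.rfl)
    rw [hcongr, Nat.card_eq_fintype_card, Fintype.card_subtype]
    apply Finset.card_le_card
    intro f hf
    rw [mem_filter] at hf ⊢
    refine ⟨mem_univ _, ?_⟩
    have hf2 := hf.2
    have hcard : (Nat.card {v : Fin n // ∃ j : Fin k, j ≠ σ v ∧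
        100 * lk < ((eSet (fun i => ((f i) : Fin n × Fin n)) {v} {u | σ u = j} : ℕ) : ℝ)})
        = (univ.filter (fun v : Fin n => ∃ j : Fin k, j ≠ σ v ∧
          100 * lk < ((univ.filter (fun i : Fin m =>
            Qp σ (v,j) ((f i) : Fin n × Fin n))).card : ℝ))).card := by
      rw [Nat.card_eq_fintype_card, Fintype.card_subtype]
      congr 1
      apply filter_congr
      intro v _
      simp only [hQe]
    rw [hcard] at hf2
    rw [ht0def]
    have : ⌊(n:ℝ)/(4*k*lk)⌋₊ < (univ.filter (fun v : Fin n => ∃ j : Fin k, j ≠ σ v ∧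
          100 * lk < ((univ.filter (fun i : Fin m =>
            Qp σ (v,j) ((f i) : Fin n × Fin n))).card : ℝ))).card := by
      rw [Nat.floor_lt (by positivity)]
      exact hf2
    exact Nat.succ_le_of_lt this
  -- the size of the sample space
  have hΩcard : Nat.card (CondSpace n m k σ) = N ^ m := by
    rw [Nat.card_congr
      (Equiv.subtypePiEquivPi (p := fun (_ : Fin m) (q : Fin n × Fin n) => σ q.1 ≠ σ q.2)),
      Nat.card_eq_fintype_card, Fintype.card_fun, Fintype.card_fin, hNdef]

  -- real-side estimates
  have hexp3 : Real.exp 1 ≤ 3 := by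
    have := Real.exp_one_lt_d9; linarith
  have hNR0 : (0:ℝ) < (N:ℝ) := by exact_mod_cast hN0
  obtain ⟨BR, hBRdef⟩ : ∃ BR : ℝ, BR = 2*((t₀:ℝ)*(Mx:ℝ)) := ⟨_, rfl⟩
  have hBR0 : (0:ℝ) ≤ BR := by rw [hBRdef]; positivity
  have hBreal : BR ≤ 0.61 * ((n:ℝ)^2/((k:ℝ)^2*lk)) := by
    rw [hBRdef]
    have h1 : (t₀:ℝ) * (Mx:ℝ) ≤ (1.1 * ((n:ℝ)/(4*k*lk))) * (1.1 * ((n:ℝ)/k)) :=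
      mul_le_mul ht0le hMx (by positivity) (by positivity)
    have h2 : 2 * ((1.1 * ((n:ℝ)/(4*k*lk))) * (1.1 * ((n:ℝ)/k)))
        = 0.605 * ((n:ℝ)^2/((k:ℝ)^2*lk)) := by
      field_simp
      ring
    have h3 : 0.605 * ((n:ℝ)^2/((k:ℝ)^2*lk)) ≤ 0.61 * ((n:ℝ)^2/((k:ℝ)^2*lk)) :=
      mul_le_mul_of_nonneg_right (by norm_num) (by positivity)
    linarith
  -- bound on the choose (n*k, t₀) factor
  have hC1 : (((n*k).choose t₀ : ℕ) : ℝ) ≤ Real.exp (2*(n:ℝ)/k) := by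
    have h1 := choose_le_epow (n*k) t₀ ht0pos
    have hx0 : (0:ℝ) < (n:ℝ)/(4*k*lk) := by positivity
    have hb1 : Real.exp 1 * ((n*k : ℕ):ℝ) / t₀ ≤ Real.exp 1 * ((n*k : ℕ):ℝ) / ((n:ℝ)/(4*k*lk)) :=
      div_le_div_of_nonneg_left (by positivity) hx0 ht0ge.le
    have hb2 : Real.exp 1 * ((n*k : ℕ):ℝ) / ((n:ℝ)/(4*k*lk)) = Real.exp 1 * (4*(k:ℝ)^2*lk) := by
      push_cast
      field_simp
    have hb3 : Real.exp 1 * (4*(k:ℝ)^2*lk) ≤ (k:ℝ)^4 := by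
      have p1 : Real.exp 1 * (4*(k:ℝ)^2*lk) ≤ 3 * (4*(k:ℝ)^2*lk) :=
        mul_le_mul_of_nonneg_right hexp3 (by positivity)
      have p2 : (k:ℝ)^2*lk ≤ (k:ℝ)^2*k := mul_le_mul_of_nonneg_left hlkk (by positivity)
      have p3 : 100*((k:ℝ)^2*k) ≤ (k:ℝ)*((k:ℝ)^2*k) :=
        mul_le_mul_of_nonneg_right hkR (by positivity)
      have p4 : (k:ℝ)*((k:ℝ)^2*k) = (k:ℝ)^4 := by ring
      have p5 : (0:ℝ) ≤ (k:ℝ)^2*k := by positivity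
      linarith
    have hb : Real.exp 1 * ((n*k : ℕ):ℝ) / t₀ ≤ (k:ℝ)^4 := by
      rw [hb2] at hb1; linarith
    have h2 : (((n*k).choose t₀ : ℕ):ℝ) ≤ ((k:ℝ)^4)^t₀ :=
      h1.trans (pow_le_pow_left₀ (by positivity) hb t₀)
    have hk4 : ((k:ℝ)^4)^t₀ = Real.exp ((t₀:ℝ) * (4*lk)) := by
      have hek : Real.exp lk = k := by rw [hlkdef]; exact Real.exp_log hk0R
      rw [← hek, ← Real.exp_nat_mul, ← Real.exp_nat_mul]
      ring_nf
    have hexple : (t₀:ℝ) * (4*lk) ≤ 2*(n:ℝ)/k := by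
      have h3 : (t₀:ℝ) * (4*lk) ≤ (1.1 * ((n:ℝ)/(4*k*lk))) * (4*lk) :=
        mul_le_mul_of_nonneg_right ht0le (by positivity)
      have h4 : (1.1 * ((n:ℝ)/(4*k*lk))) * (4*lk) = 1.1*((n:ℝ)/k) := by
        field_simp
      have h5 : 2*(n:ℝ)/k = 2*((n:ℝ)/k) := by ring
      have h6 : (0:ℝ) ≤ (n:ℝ)/k := by positivity
      linarith
    rw [hk4] at h2
    exact h2.trans (Real.exp_le_exp.2 hexple)
  -- bound on the Chernoff factor
  have hs' : 12.5*((n:ℝ)/k) ≤ (s₀:ℝ) := by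
    have heq : 25*(n:ℝ)/(2*k) = 12.5*((n:ℝ)/k) := by ring
    linarith
  have hcore : (Real.exp 1 * m / s₀) * (BR/(N:ℝ)) ≤ 1/5 := by
    have hrw : Real.exp 1 * (m:ℝ) / s₀ * (BR/(N:ℝ)) = (Real.exp 1 * m * BR)/((s₀:ℝ) * N) := by
      field_simp
    rw [hrw, div_le_iff₀ (by positivity)]
    have h1 : Real.exp 1 * (m:ℝ) * BR ≤ 3 * (1.1*((k:ℝ)*lk*n)) * (0.61 * ((n:ℝ)^2/((k:ℝ)^2*lk))) := by
      apply mul_le_mul _ hBreal hBR0 (by positivity)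
      apply mul_le_mul hexp3 hmle (by positivity) (by norm_num)
    have h2 : 3 * (1.1*((k:ℝ)*lk*n)) * (0.61 * ((n:ℝ)^2/((k:ℝ)^2*lk))) = 2.013 * ((n:ℝ)^3/k) := by
      field_simp
      ring
    have h3 : 11.25 * ((n:ℝ)^3/k) ≤ (s₀:ℝ) * N := by
      have hmul := mul_le_mul hs' hNge (by positivity) (by positivity)
      have heq : 12.5*((n:ℝ)/k) * (0.9*(n:ℝ)^2) = 11.25 * ((n:ℝ)^3/k) := by ring
      linarith
    have h4 : (0:ℝ) ≤ (n:ℝ)^3/k := by positivity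
    linarith
  have h15 : (1/5:ℝ) ≤ Real.exp (-(3/2)) := inv5_le_exp_neg
  have hC2B : (m.choose s₀ : ℝ) * (BR/(N:ℝ))^s₀ ≤ Real.exp (-(3/2) * s₀) := by
    have h1 : (m.choose s₀ : ℝ) ≤ (Real.exp 1 * m / s₀)^s₀ := choose_le_epow m s₀ hs0pos
    calc (m.choose s₀ : ℝ) * (BR/(N:ℝ))^s₀
        ≤ (Real.exp 1 * m / s₀)^s₀ * (BR/(N:ℝ))^s₀ :=
          mul_le_mul_of_nonneg_right h1 (by positivity)
      _ = ((Real.exp 1 * m / s₀) * (BR/(N:ℝ)))^s₀ := (mul_pow _ _ _).symm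
      _ ≤ (1/5)^s₀ := pow_le_pow_left₀ (by positivity) hcore s₀
      _ ≤ (Real.exp (-(3/2)))^s₀ := pow_le_pow_left₀ (by norm_num) h15 s₀
      _ = Real.exp (-(3/2) * s₀) := by
          rw [← Real.exp_nat_mul]
          ring_nf
  -- assemble
  have hBN : BR ^ s₀ * (N:ℝ)^(m - s₀) = (BR/(N:ℝ))^s₀ * (N:ℝ)^m := by
    rw [div_pow, pow_sub₀ _ (ne_of_gt hNR0) hs0m]
    field_simp
  have hfin : ((((n*k).choose t₀) * ((m.choose s₀) * ((2*(t₀*Mx))^s₀ * N^(m-s₀))) : ℕ) : ℝ)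
      ≤ Real.exp (-10*(n:ℝ)/k) * ((N:ℝ)^m) := by
    push_cast
    rw [← hBRdef]
    calc (((n*k).choose t₀ : ℕ):ℝ) * ((m.choose s₀ : ℕ) * (BR^s₀ * (N:ℝ)^(m-s₀)))
        = (((n*k).choose t₀ : ℕ):ℝ) * (((m.choose s₀ : ℕ):ℝ) * (BR/(N:ℝ))^s₀) * (N:ℝ)^m := by
          rw [hBN]; ring
      _ ≤ Real.exp (2*(n:ℝ)/k) * Real.exp (-(3/2) * s₀) * (N:ℝ)^m := by
          apply mul_le_mul_of_nonneg_right _ (by positivity)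
          exact mul_le_mul hC1 hC2B (by positivity) (Real.exp_pos _).le
      _ = Real.exp (2*(n:ℝ)/k + -(3/2) * s₀) * (N:ℝ)^m := by rw [← Real.exp_add]
      _ ≤ Real.exp (-10*(n:ℝ)/k) * (N:ℝ)^m := by
          apply mul_le_mul_of_nonneg_right _ (by positivity)
          apply Real.exp_le_exp.2
          have h6 : (0:ℝ) ≤ (n:ℝ)/k := by positivity
          have h7 : 2*(n:ℝ)/k = 2*((n:ℝ)/k) := by ring
          have h8 : -10*(n:ℝ)/k = -10*((n:ℝ)/k) := by ring
          linarith
  -- final computation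
  unfold prob
  rw [hΩcard]
  have hden0 : (0:ℝ) < ((N ^ m : ℕ) : ℝ) := by
    have : 0 < N ^ m := pow_pos hN0 m
    exact_mod_cast this
  rw [div_le_iff₀ hden0]
  have hnumR : ((Nat.card {e : CondSpace n m k σ //
      (n:ℝ) / (4 * (k:ℝ) * lk) < ((Nat.card {v : Fin n // ∃ j : Fin k, j ≠ σ v ∧
        100 * lk < ((eSet e.1 {v} {u | σ u = j} : ℕ) : ℝ)}) : ℝ)} : ℕ) : ℝ)
      ≤ ((((n*k).choose t₀) * ((m.choose s₀) * ((2*(t₀*Mx))^s₀ * N^(m-s₀))) : ℕ) : ℝ) :=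
    Nat.cast_le.2 hnum
  have hNcast : ((N ^ m : ℕ) : ℝ) = (N:ℝ)^m := by push_cast; ring
  rw [hNcast]
  exact hnumR.trans hfin
end
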